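/- arXiv:2410.07248 — 5 statements merged into one kernel-verified Lean document; each statement's English description precedes it below -/
import Mathlib

section
/- Let α, β ∈ S_n be permutations such that the subgroup generated by α and β acts transitively on [n], and let γ = αβ. Then κ(α) + κ(β) + κ(γ) − n is an even integer that is at most 2, where κ(π) denotes the number of cycles of π. Equivalently, there is a nonnegative integer g with κ(α) + κ(β) − n + κ(γ) = 2 − 2g. -/
open Equiv Finset

noncomputable section
open scoped Classical

/-- The cycle type of a permutation of `Fin n`, including fixed points (parts equal to 1). -/
def fullCycleType {n : ℕ} (σ : Equiv.Perm (Fin n)) : Multiset ℕ :=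
  σ.cycleType + Multiset.replicate (n - σ.cycleType.sum) 1

/-- `κ(σ)`: the number of cycles of a permutation, fixed points counting as cycles. -/
def kappa {n : ℕ} (σ : Equiv.Perm (Fin n)) : ℕ := (fullCycleType σ).card

/-- The parts of a partition sorted in weakly decreasing order. -/
def sortedParts {n : ℕ} (lam : Nat.Partition n) : List ℕ := (lam.parts.sort (· ≤ ·)).reverse

/-- `λ_i`, the `i`-th part (0-indexed) of a partition, `0` if `i` is too large. -/
def partFn {n : ℕ} (lam : Nat.Partition n) (i : ℕ) : ℕ := (sortedParts lam).getD i 0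

/-- The `j`-th part of the conjugate partition. -/
def conjFn {n : ℕ} (lam : Nat.Partition n) (j : ℕ) : ℕ :=
  ((Finset.range n).filter fun i => j < partFn lam i).card

/-- The cells `(i, j)` (row, column; 0-indexed) of the Young diagram of a partition of `n`. -/
def cells {n : ℕ} (lam : Nat.Partition n) : Finset (ℕ × ℕ) :=
  (Finset.range n ×ˢ Finset.range n).filter fun c => c.2 < partFn lam c.1

/-- The hook length `h(u)` of a cell `u = (i, j)` of a partition. -/
def hookLen {n : ℕ} (lam : Nat.Partition n) (c : ℕ × ℕ) : ℕ :=
  partFn lam c.1 - c.2 + (conjFn lam c.2 - c.1) - 1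

/-- The content `c(u) = j - i` of a cell `u = (i, j)`. -/
def content (c : ℕ × ℕ) : ℚ := (c.2 : ℚ) - (c.1 : ℚ)

/-- `f^λ`, the dimension of the irreducible representation of `S_n` indexed by `λ`,
given by the hook length formula. -/
def fdim {n : ℕ} (lam : Nat.Partition n) : ℚ :=
  (n.factorial : ℚ) / ∏ c ∈ cells lam, (hookLen lam c : ℚ)

/-- `𝔪_{λ,m} = ∏_{u∈λ} (m + c(u))/h(u)`. -/
def mfrak {n : ℕ} (lam : Nat.Partition n) (m : ℕ) : ℚ :=
  ∏ c ∈ cells lam, (((m : ℚ) + content c) / (hookLen lam c : ℚ))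

/-- `𝔠_{λ,m} = ∑_{d=0}^m (−1)^d C(m,d) 𝔪_{λ,m−d}`. -/
def cfrak {n : ℕ} (lam : Nat.Partition n) (m : ℕ) : ℚ :=
  ∑ d ∈ Finset.range (m + 1), (-1 : ℚ) ^ d * (m.choose d : ℚ) * mfrak lam (m - d)

/-- The signless Stirling number of the first kind: the number of permutations
of `[n]` with exactly `k` cycles. -/
def stirl (n k : ℕ) : ℕ := Fintype.card {σ : Equiv.Perm (Fin n) // kappa σ = k}

/-- `|C_μ|`: the number of permutations of `Fin n` of cycle type `μ`. -/
def classCard {n : ℕ} (mu : Nat.Partition n) : ℕ :=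
  Fintype.card {σ : Equiv.Perm (Fin n) // fullCycleType σ = mu.parts}

/-- power sum symmetric polynomial `p_k = ∑ x_i^k`. -/
def powSum (n k : ℕ) : MvPolynomial (Fin n) ℤ := ∑ i : Fin n, MvPolynomial.X i ^ k

/-- Vandermonde product `∏_{i<j} (x_i - x_j)`. -/
def vdm (n : ℕ) : MvPolynomial (Fin n) ℤ :=
  ∏ p ∈ Finset.univ.filter (fun p : Fin n × Fin n => p.1 < p.2),
    (MvPolynomial.X p.1 - MvPolynomial.X p.2)

/-- The irreducible character `χ^λ` of `S_n` evaluated on the conjugacy class of cycle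
type `μ`, via the Frobenius character formula: `χ^λ(μ)` is the coefficient of the
monomial `x^{λ+δ}` in `∏_{i<j}(x_i-x_j) ⬝ ∏_k p_{μ_k}`, where `δ = (n-1, n-2, …, 0)`. -/
def chi {n : ℕ} (lam mu : Nat.Partition n) : ℤ :=
  MvPolynomial.coeff
    (Finsupp.equivFunOnFinite.symm fun i : Fin n => partFn lam i + (n - 1 - (i : ℕ)))
    (vdm n * (mu.parts.map (powSum n)).prod)

/-- The partition `[1^n]` of `n`. -/
def ones (n : ℕ) : Nat.Partition n :=
  ⟨Multiset.replicate n 1, by intro i hi; simp_all [Multiset.eq_of_mem_replicate hi], by simp⟩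

/-- The generalized (polynomial) binomial coefficient `C(x, m) = x(x-1)⋯(x-m+1)/m!`. -/
def qchoose (x : ℚ) (m : ℕ) : ℚ := (∏ s ∈ Finset.range m, (x - (s : ℚ))) / (m.factorial : ℚ)


namespace Stmt2Aux

open Equiv.Perm Subgroup

variable {X : Type*} [Fintype X] [DecidableEq X]

/-- Join of a setoid with one extra pair `(a, b)`. -/
def joinS (s : Setoid X) (a b : X) : Setoid X where
  r x y := s.r x y ∨ (s.r x a ∧ s.r b y) ∨ (s.r x b ∧ s.r a y)
  iseqv := by
    constructor
    · intro x; exact Or.inl (s.refl x)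
    · rintro x y (h | ⟨h1, h2⟩ | ⟨h1, h2⟩)
      · exact Or.inl (s.symm h)
      · exact Or.inr (Or.inr ⟨s.symm h2, s.symm h1⟩)
      · exact Or.inr (Or.inl ⟨s.symm h2, s.symm h1⟩)
    · rintro x y z (h | ⟨h1, h2⟩ | ⟨h1, h2⟩) (h' | ⟨h1', h2'⟩ | ⟨h1', h2'⟩)
      · exact Or.inl (s.trans h h')
      · exact Or.inr (Or.inl ⟨s.trans h h1', h2'⟩)
      · exact Or.inr (Or.inr ⟨s.trans h h1', h2'⟩)
      · exact Or.inr (Or.inl ⟨h1, s.trans h2 h'⟩)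
      · exact Or.inl (s.trans h1 (s.trans (s.symm (s.trans h2 h1')) h2'))
      · exact Or.inl (s.trans h1 h2')
      · exact Or.inr (Or.inr ⟨h1, s.trans h2 h'⟩)
      · exact Or.inl (s.trans h1 h2')
      · exact Or.inl (s.trans h1 (s.trans (s.symm (s.trans h2 h1')) h2'))

lemma joinS_r {s : Setoid X} {a b x y : X} :
    (joinS s a b).r x y ↔ s.r x y ∨ (s.r x a ∧ s.r b y) ∨ (s.r x b ∧ s.r a y) := Iff.rfl

lemma joinS_eq {s : Setoid X} {a b : X} (h : s.r a b) : joinS s a b = s := by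
  apply Setoid.ext; intro x y
  constructor
  · rintro (h' | ⟨h1, h2⟩ | ⟨h1, h2⟩)
    · exact h'
    · exact s.trans (s.trans h1 h) h2
    · exact s.trans (s.trans h1 (s.symm h)) h2
  · exact Or.inl

/-- Number of equivalence classes. -/
def nclasses (s : Setoid X) : ℕ := Fintype.card (Quotient s)

lemma nclasses_joinS (s : Setoid X) {a b : X} (hab : ¬ s.r a b) :
    nclasses (joinS s a b) + 1 = nclasses s := by
  classical
  set j := joinS s a b with hj
  let φ : Quotient s → Quotient j := Quot.lift (fun x => Quotient.mk j x)
    (fun x y h => Quot.sound (Or.inl h))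
  have hφ : ∀ x : X, φ (Quotient.mk s x) = Quotient.mk j x := fun _ => rfl
  have hbij : Function.Bijective
      (fun u : {u : Quotient s // u ≠ Quotient.mk s b} => φ u.1) := by
    constructor
    · rintro ⟨u, hu⟩ ⟨v, hv⟩ h
      ext
      induction u using Quot.ind with | _ x =>
      induction v using Quot.ind with | _ y =>
      have h' : (joinS s a b).r x y := Quotient.exact h
      rcases h' with h' | ⟨h1, h2⟩ | ⟨h1, h2⟩
      · exact Quot.sound h'
      · exact absurd (Quot.sound (s.symm h2) : Quotient.mk s y = Quotient.mk s b) hv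
      · exact absurd (Quot.sound h1 : Quotient.mk s x = Quotient.mk s b) hu
    · intro z
      induction z using Quot.ind with | _ x =>
      by_cases hx : s.r x b
      · refine ⟨⟨Quotient.mk s a, fun hc => hab (Quotient.exact hc)⟩, ?_⟩
        show Quotient.mk j a = Quotient.mk j x
        exact Quot.sound (Or.inr (Or.inl ⟨s.refl a, s.symm hx⟩))
      · exact ⟨⟨Quotient.mk s x, fun hc => hx (Quotient.exact hc)⟩, rfl⟩
  have hcard := Fintype.card_of_bijective hbij
  have h1 : Fintype.card {u : Quotient s // u ≠ Quotient.mk s b} + 1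
      = Fintype.card (Quotient s) := by
    rw [← Fintype.card_congr (Equiv.optionSubtypeNe (Quotient.mk s b)), Fintype.card_option]
  rw [nclasses, nclasses, ← hcard, ← h1]

lemma nclasses_congr {s s' : Setoid X} (h : s = s') : nclasses s = nclasses s' := by rw [h]

/-- The `SameCycle` setoid of a permutation. -/
def scS (σ : Equiv.Perm X) : Setoid X :=
  ⟨σ.SameCycle, ⟨fun _ => Equiv.Perm.SameCycle.refl σ _, fun h => h.symm, fun h h' => h.trans h'⟩⟩

/-- κ as the number of `SameCycle`-classes. -/
def korb (σ : Equiv.Perm X) : ℕ := nclasses (scS σ)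

/-- `SameCycle σ` is the finest equivalence relation joining each `x` to `σ x`. -/
lemma sameCycle_le {σ : Equiv.Perm X} {s : Setoid X} (hs : ∀ x, s.r x (σ x)) :
    ∀ {x y}, σ.SameCycle x y → s.r x y := by
  have hn : ∀ (k : ℕ) (x), s.r x ((σ ^ k) x) := by
    intro k
    induction k with
    | zero => intro x; simpa using s.refl x
    | succ k ih =>
      intro x
      have : (σ ^ (k + 1)) x = (σ ^ k) (σ x) := by
        rw [pow_succ]; rfl
      rw [this]
      exact s.trans (hs x) (ih (σ x))
  rintro x y ⟨i, rfl⟩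
  cases i with
  | ofNat k => simpa using hn k x
  | negSucc k =>
    have harg : ((k : ℤ) + 1) + Int.negSucc k = 0 := by
      rw [Int.negSucc_eq]; ring
    have h2 : (σ ^ ((k : ℤ) + 1)) ((σ ^ (Int.negSucc k)) x) = x := by
      rw [← Equiv.Perm.mul_apply, ← zpow_add, harg, zpow_zero, Equiv.Perm.one_apply]
    have h3 : (σ ^ (k + 1) : Equiv.Perm X) = σ ^ ((k : ℤ) + 1) := by
      rw [← zpow_natCast]; norm_cast
    have := hn (k + 1) ((σ ^ (Int.negSucc k)) x)
    rw [h3, h2] at this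
    exact s.symm this

lemma fix_zpow {σ : Equiv.Perm X} {x : X} (h : σ x = x) : ∀ i : ℤ, (σ ^ i) x = x := by
  intro i
  induction i using Int.induction_on with
  | zero => simp
  | succ i ih => rw [zpow_add_one, Equiv.Perm.mul_apply, h, ih]
  | pred i ih =>
    rw [zpow_sub_one, Equiv.Perm.mul_apply]
    have hinv : σ⁻¹ x = x := by
      conv_lhs => rw [← h]
      simp
    rw [hinv, ih]

lemma zpow_apply_reduce {g : Equiv.Perm X} {x : X} {m : ℕ} (hm : 0 < m)
    (hfix : (g ^ m) x = x) (i : ℤ) : ∃ r : ℕ, r < m ∧ (g ^ i) x = (g ^ r) x := by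
  have hmz : (0 : ℤ) < (m : ℤ) := by exact_mod_cast hm
  refine ⟨(i % (m : ℤ)).toNat, ?_, ?_⟩
  · have h1 : i % (m : ℤ) < (m : ℤ) := Int.emod_lt_of_pos i hmz
    omega
  · have h0 : (0 : ℤ) ≤ i % (m : ℤ) := Int.emod_nonneg i (by omega)
    have hfixz : (g ^ (m : ℤ)) x = x := by rw [zpow_natCast]; exact hfix
    have hfixq : ∀ q : ℤ, (g ^ ((m : ℤ) * q)) x = x := by
      intro q
      rw [zpow_mul]
      exact fix_zpow hfixz q
    have hsplit : i = i % (m : ℤ) + (m : ℤ) * (i / (m : ℤ)) := by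
      rw [Int.emod_add_mul_ediv]
    calc (g ^ i) x = (g ^ (i % (m : ℤ) + (m : ℤ) * (i / (m : ℤ)))) x := by rw [← hsplit]
    _ = (g ^ (i % (m : ℤ))) ((g ^ ((m : ℤ) * (i / (m : ℤ)))) x) := by
        rw [zpow_add, Equiv.Perm.mul_apply]
    _ = (g ^ (i % (m : ℤ))) x := by rw [hfixq]
    _ = (g ^ (i % (m : ℤ)).toNat) x := by
        rw [← zpow_natCast g (i % (m : ℤ)).toNat, Int.toNat_of_nonneg h0]

/-- If `a, b` lie in different cycles of `ρ`, they are in the same cycle of `ρ * swap a b`. -/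
lemma sameCycle_mul_swap {ρ : Equiv.Perm X} {a b : X} (h : ¬ ρ.SameCycle a b) :
    (ρ * Equiv.swap a b).SameCycle a b := by
  set g := ρ * Equiv.swap a b with hg
  have key : ∀ k : ℕ, 1 ≤ k → (g ^ k) a = (ρ ^ k) b ∨ g.SameCycle a b := by
    intro k hk
    induction k with
    | zero => omega
    | succ k ih =>
      rcases Nat.lt_or_ge k 1 with hk1 | hk1
      · interval_cases k
        left
        simp [hg, Equiv.Perm.mul_apply, Equiv.swap_apply_left]
      · rcases ih hk1 with hgk | hsc
        · by_cases hb : (ρ ^ k) b = b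
          · right
            exact ⟨(k : ℤ), by rw [zpow_natCast, hgk, hb]⟩
          · have ha : (ρ ^ k) b ≠ a := by
              intro hc
              exact h (Equiv.Perm.SameCycle.symm ⟨(k : ℤ), by rw [zpow_natCast]; exact hc⟩)
            left
            have : (g ^ (k + 1)) a = g ((g ^ k) a) := by
              rw [pow_succ', Equiv.Perm.mul_apply]
            rw [this, hgk, hg, Equiv.Perm.mul_apply,
              Equiv.swap_apply_of_ne_of_ne ha hb, ← Equiv.Perm.mul_apply, ← pow_succ']
        · exact Or.inr hsc
  have hop : 0 < orderOf ρ := orderOf_pos ρ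
  have hord : (ρ ^ orderOf ρ) b = b := by rw [pow_orderOf_eq_one]; rfl
  rcases key (orderOf ρ) hop with hk | hsc
  · exact ⟨(orderOf ρ : ℤ), by rw [zpow_natCast, hk, hord]⟩
  · exact hsc

/-- If `a, b` lie in the same cycle of `ρ`, they are in different cycles of `ρ * swap a b`. -/
lemma not_sameCycle_mul_swap {ρ : Equiv.Perm X} {a b : X} (hab : a ≠ b) (h : ρ.SameCycle a b) :
    ¬ (ρ * Equiv.swap a b).SameCycle a b := by
  set g := ρ * Equiv.swap a b with hg
  have hex : ∃ m : ℕ, 0 < m ∧ (ρ ^ m) b = a := by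
    obtain ⟨i, hi, hie⟩ := (h.symm).exists_pow_eq'
    rcases Nat.eq_zero_or_pos i with h0 | h0
    · exact absurd (by simpa [h0] using hie) hab.symm
    · exact ⟨i, h0, hie⟩
  set m := Nat.find hex with hm
  obtain ⟨hm0, hma⟩ := Nat.find_spec hex
  have hleast : ∀ j, 0 < j → j < m → (ρ ^ j) b ≠ a := by
    intro j hj hjm hc
    exact Nat.find_min hex hjm ⟨hj, hc⟩
  have hnotb : ∀ j, 0 < j → j < m → (ρ ^ j) b ≠ b := by
    intro j hj hjm hc
    have hsub : (ρ ^ (m - j)) b = a := by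
      have h1 : (ρ ^ (m - j)) ((ρ ^ j) b) = a := by
        rw [← Equiv.Perm.mul_apply, ← pow_add, Nat.sub_add_cancel hjm.le]
        exact hma
      rwa [hc] at h1
    exact hleast (m - j) (by omega) (by omega) hsub
  have htraj : ∀ k, 1 ≤ k → k ≤ m → (g ^ k) a = (ρ ^ k) b := by
    intro k hk
    induction k with
    | zero => omega
    | succ k ih =>
      intro hkm
      rcases Nat.lt_or_ge k 1 with hk1 | hk1
      · interval_cases k
        simp [hg, Equiv.Perm.mul_apply, Equiv.swap_apply_left]
      · have hgk := ih hk1 (by omega)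
        have hkb : (ρ ^ k) b ≠ b := hnotb k (by omega) (by omega)
        have hka : (ρ ^ k) b ≠ a := hleast k (by omega) (by omega)
        have : (g ^ (k + 1)) a = g ((g ^ k) a) := by rw [pow_succ', Equiv.Perm.mul_apply]
        rw [this, hgk, hg, Equiv.Perm.mul_apply,
          Equiv.swap_apply_of_ne_of_ne hka hkb, ← Equiv.Perm.mul_apply, ← pow_succ']
  have hfixa : (g ^ m) a = a := by rw [htraj m hm0 le_rfl, hma]
  rintro ⟨i, hi⟩
  obtain ⟨r, hrm, hre⟩ := zpow_apply_reduce hm0 hfixa i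
  rw [hre] at hi
  rcases Nat.eq_zero_or_pos r with h0 | h0
  · rw [h0] at hi; simp at hi; exact hab hi
  · rw [htraj r h0 hrm.le] at hi
    exact hnotb r h0 hrm hi

lemma scS_mul_swap {ρ : Equiv.Perm X} {a b : X} (hab : a ≠ b) (h : ¬ ρ.SameCycle a b) :
    scS (ρ * Equiv.swap a b) = joinS (scS ρ) a b := by
  set g := ρ * Equiv.swap a b with hg
  have hga : g a = ρ b := by rw [hg, Equiv.Perm.mul_apply, Equiv.swap_apply_left]
  have hgb : g b = ρ a := by rw [hg, Equiv.Perm.mul_apply, Equiv.swap_apply_right]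
  have hgo : ∀ x, x ≠ a → x ≠ b → g x = ρ x := by
    intro x hxa hxb
    rw [hg, Equiv.Perm.mul_apply, Equiv.swap_apply_of_ne_of_ne hxa hxb]
  have key : g.SameCycle a b := sameCycle_mul_swap h
  have step : ∀ (σ : Equiv.Perm X) (x : X), σ.SameCycle x (σ x) := fun σ x => ⟨1, by simp⟩
  have h1 : ∀ x y, ρ.SameCycle x y → g.SameCycle x y := by
    intro x y
    apply sameCycle_le (s := scS g)
    intro x
    by_cases hxa : x = a
    · rw [hxa, show ρ a = g b from hgb.symm]
      exact key.trans (step g b)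
    · by_cases hxb : x = b
      · rw [hxb, show ρ b = g a from hga.symm]
        exact key.symm.trans (step g a)
      · rw [show ρ x = g x from (hgo x hxa hxb).symm]
        exact step g x
  apply Setoid.ext; intro x y
  constructor
  · apply sameCycle_le (s := joinS (scS ρ) a b)
    intro x
    by_cases hxa : x = a
    · rw [hxa, hga]
      exact Or.inr (Or.inl ⟨(scS ρ).refl a, step ρ b⟩)
    · by_cases hxb : x = b
      · rw [hxb, hgb]
        exact Or.inr (Or.inr ⟨(scS ρ).refl b, step ρ a⟩)
      · rw [hgo x hxa hxb]
        exact Or.inl (step ρ x)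
  · rintro (hr | ⟨ha1, hb1⟩ | ⟨ha1, hb1⟩)
    · exact h1 _ _ hr
    · exact (h1 _ _ ha1).trans (key.trans (h1 _ _ hb1))
    · exact (h1 _ _ ha1).trans (key.symm.trans (h1 _ _ hb1))

lemma korb_mul_swap_of_not {ρ : Equiv.Perm X} {a b : X} (hab : a ≠ b)
    (h : ¬ ρ.SameCycle a b) : korb (ρ * Equiv.swap a b) + 1 = korb ρ := by
  rw [korb, korb, scS_mul_swap hab h]
  exact nclasses_joinS _ h

lemma korb_mul_swap_of_same {ρ : Equiv.Perm X} {a b : X} (hab : a ≠ b)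
    (h : ρ.SameCycle a b) : korb (ρ * Equiv.swap a b) = korb ρ + 1 := by
  have h2 := not_sameCycle_mul_swap hab h
  have h3 := korb_mul_swap_of_not hab h2
  rw [mul_assoc, Equiv.swap_mul_self, mul_one] at h3
  omega

/-- Orbit setoid of a subgroup of permutations. -/
def orbS (G : Subgroup (Equiv.Perm X)) : Setoid X where
  r x y := ∃ g ∈ G, g x = y
  iseqv := by
    constructor
    · intro x; exact ⟨1, one_mem G, rfl⟩
    · rintro x y ⟨g, hgmem, rfl⟩
      exact ⟨g⁻¹, inv_mem hgmem, Equiv.symm_apply_apply g x⟩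
    · rintro x y z ⟨g, hgmem, rfl⟩ ⟨g', hgmem', rfl⟩
      exact ⟨g' * g, mul_mem hgmem' hgmem, rfl⟩

lemma sameCycle_le_orbS {G : Subgroup (Equiv.Perm X)} {g : Equiv.Perm X} (hgmem : g ∈ G)
    {x y : X} (h : g.SameCycle x y) : (orbS G).r x y := by
  obtain ⟨i, rfl⟩ := h
  exact ⟨g ^ i, zpow_mem hgmem i, rfl⟩

lemma orbS_closure_insert_swap (S : Set (Equiv.Perm X)) (a b : X) :
    orbS (Subgroup.closure (insert (Equiv.swap a b) S))
      = joinS (orbS (Subgroup.closure S)) a b := by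
  set G := Subgroup.closure S with hG
  set H := Subgroup.closure (insert (Equiv.swap a b) S) with hH
  set j := joinS (orbS G) a b with hj
  have hmain : ∀ g ∈ H, ∀ x, j.r x (g x) := by
    intro g hgmem
    induction hgmem using Subgroup.closure_induction with
    | mem g hgS =>
      rcases hgS with rfl | hgS
      · intro x
        rcases eq_or_ne x a with rfl | hxa
        · simp only [Equiv.swap_apply_left]
          exact Or.inr (Or.inl ⟨(orbS G).refl x, (orbS G).refl b⟩)
        · rcases eq_or_ne x b with rfl | hxb
          · simp only [Equiv.swap_apply_right]
            exact Or.inr (Or.inr ⟨(orbS G).refl x, (orbS G).refl a⟩)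
          · simp only [Equiv.swap_apply_of_ne_of_ne hxa hxb]
            exact Or.inl ((orbS G).refl x)
      · intro x
        exact Or.inl ⟨g, Subgroup.subset_closure hgS, rfl⟩
    | one => intro x; exact Or.inl ((orbS G).refl x)
    | mul g g' _ _ ihg ihg' =>
      intro x
      have h1 := ihg' x
      have h2 := ihg (g' x)
      rw [Equiv.Perm.mul_apply]
      exact j.trans h1 h2
    | inv g _ ihg =>
      intro x
      have h1 := ihg (g⁻¹ x)
      rw [show g (g⁻¹ x) = x from Equiv.apply_symm_apply g x] at h1
      exact j.symm h1
  apply Setoid.ext; intro x y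
  constructor
  · rintro ⟨g, hgmem, rfl⟩
    exact hmain g hgmem x
  · have hGH : G ≤ H := Subgroup.closure_mono (Set.subset_insert _ _)
    have hswap : Equiv.swap a b ∈ H := Subgroup.subset_closure (Set.mem_insert _ _)
    rintro (⟨g, hgmem, rfl⟩ | ⟨⟨g1, hm1, he1⟩, ⟨g2, hm2, he2⟩⟩ | ⟨⟨g1, hm1, he1⟩, ⟨g2, hm2, he2⟩⟩)
    · exact ⟨g, hGH hgmem, rfl⟩
    · refine ⟨g2 * Equiv.swap a b * g1, mul_mem (mul_mem (hGH hm2) hswap) (hGH hm1), ?_⟩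
      rw [Equiv.Perm.mul_apply, Equiv.Perm.mul_apply, he1, Equiv.swap_apply_left, he2]
    · refine ⟨g2 * Equiv.swap a b * g1, mul_mem (mul_mem (hGH hm2) hswap) (hGH hm1), ?_⟩
      rw [Equiv.Perm.mul_apply, Equiv.Perm.mul_apply, he1, Equiv.swap_apply_right, he2]

lemma closure_insert_swap_eq (σ τ : Equiv.Perm X) (a b : X) :
    Subgroup.closure (insert (Equiv.swap a b) {σ, τ})
      = Subgroup.closure (insert (Equiv.swap a b) {σ, τ * Equiv.swap a b}) := by
  have hττ : τ = τ * Equiv.swap a b * Equiv.swap a b := by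
    rw [mul_assoc, Equiv.swap_mul_self, mul_one]
  apply le_antisymm <;> rw [Subgroup.closure_le] <;> rintro g (rfl | rfl | rfl)
  · exact Subgroup.subset_closure (by simp)
  · exact Subgroup.subset_closure (by simp)
  · rw [hττ]
    exact mul_mem (Subgroup.subset_closure (by simp)) (Subgroup.subset_closure (by simp))
  · exact Subgroup.subset_closure (by simp)
  · exact Subgroup.subset_closure (by simp)
  · exact mul_mem (Subgroup.subset_closure (by simp)) (Subgroup.subset_closure (by simp))

lemma orbS_closure_pair_one (σ : Equiv.Perm X) :
    orbS (Subgroup.closure {σ, (1 : Equiv.Perm X)}) = scS σ := by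
  have hcl : Subgroup.closure {σ, (1 : Equiv.Perm X)} = Subgroup.closure {σ} := by
    apply le_antisymm
    · rw [Subgroup.closure_le]
      rintro g (rfl | rfl)
      · exact Subgroup.subset_closure rfl
      · exact one_mem _
    · exact Subgroup.closure_mono (Set.singleton_subset_iff.2 (Set.mem_insert _ _))
  apply Setoid.ext; intro x y
  constructor
  · rintro ⟨g, hgmem, rfl⟩
    rw [hcl] at hgmem
    obtain ⟨i, rfl⟩ := Subgroup.mem_closure_singleton.1 hgmem
    exact ⟨i, rfl⟩
  · rintro ⟨i, rfl⟩
    exact ⟨σ ^ i, hcl ▸ Subgroup.mem_closure_singleton.2 ⟨i, rfl⟩, rfl⟩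

end Stmt2Aux

section KappaOrb

open Stmt2Aux Equiv.Perm

lemma kappa_eq {n : ℕ} (σ : Equiv.Perm (Fin n)) :
    kappa σ = σ.cycleType.card + (n - σ.support.card) := by
  simp [kappa, fullCycleType, Equiv.Perm.sum_cycleType]

lemma korb_eq_kappa {n : ℕ} (σ : Equiv.Perm (Fin n)) : korb σ = kappa σ := by
  classical
  have hfixcl : ∀ {x y : Fin n}, σ.SameCycle x y → σ x = x → y = x := by
    rintro x y ⟨i, rfl⟩ h
    exact fix_zpow h i
  let T := {c : Equiv.Perm (Fin n) // c ∈ σ.cycleFactorsFinset} ⊕ {x : Fin n // σ x = x}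
  let fn : Fin n → T := fun x =>
    if h : σ x = x then Sum.inr ⟨x, h⟩
    else Sum.inl ⟨σ.cycleOf x,
      Equiv.Perm.cycleOf_mem_cycleFactorsFinset_iff.2 (Equiv.Perm.mem_support.2 h)⟩
  have hpos : ∀ (x : Fin n) (h : σ x = x), fn x = Sum.inr ⟨x, h⟩ := by
    intro x h; simp only [fn]; rw [dif_pos h]
  have hneg : ∀ (x : Fin n) (h : ¬ σ x = x), fn x = Sum.inl ⟨σ.cycleOf x,
      Equiv.Perm.cycleOf_mem_cycleFactorsFinset_iff.2 (Equiv.Perm.mem_support.2 h)⟩ := by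
    intro x h; simp only [fn]; rw [dif_neg h]
  have hwd : ∀ x y, σ.SameCycle x y → fn x = fn y := by
    intro x y hxy
    by_cases hx : σ x = x
    · have : y = x := hfixcl hxy hx
      subst this; rfl
    · have hy : ¬ σ y = y := by
        intro hy
        have hxy' : x = y := hfixcl hxy.symm hy
        rw [hxy'] at hx
        exact hx hy
      rw [hneg x hx, hneg y hy]
      exact congrArg Sum.inl (Subtype.ext hxy.cycleOf_eq)
  let f : Quotient (scS σ) → T := Quot.lift fn hwd
  have hinj : Function.Injective f := by
    intro u v
    induction u using Quot.ind with | _ x =>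
    induction v using Quot.ind with | _ y =>
    intro h
    change fn x = fn y at h
    by_cases hx : σ x = x <;> by_cases hy : σ y = y
    · rw [hpos x hx, hpos y hy] at h
      exact congrArg _ (Subtype.ext_iff.1 (Sum.inr.inj h))
    · rw [hpos x hx, hneg y hy] at h
      cases h
    · rw [hneg x hx, hpos y hy] at h
      cases h
    · rw [hneg x hx, hneg y hy] at h
      have hcyceq : σ.cycleOf x = σ.cycleOf y := Subtype.ext_iff.1 (Sum.inl.inj h)
      have hys : y ∈ (σ.cycleOf x).support := by
        rw [hcyceq]
        exact Equiv.Perm.mem_support_cycleOf_iff.2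
          ⟨Equiv.Perm.SameCycle.refl σ y, Equiv.Perm.mem_support.2 hy⟩
      exact Quot.sound (Equiv.Perm.mem_support_cycleOf_iff.1 hys).1
  have hsurj : Function.Surjective f := by
    rintro (⟨c, hc⟩ | ⟨x, hx⟩)
    · have hc' := Equiv.Perm.mem_cycleFactorsFinset_iff.1 hc
      obtain ⟨x, hx1, -⟩ := hc'.1
      have hxs : x ∈ c.support := Equiv.Perm.mem_support.2 hx1
      have hxσ : ¬ σ x = x := by
        have h1 : c x ≠ x := Equiv.Perm.mem_support.1 hxs
        rw [hc'.2 x hxs] at h1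
        exact h1
      refine ⟨Quot.mk _ x, ?_⟩
      show fn x = _
      rw [hneg x hxσ]
      exact congrArg Sum.inl (Subtype.ext (Equiv.Perm.cycle_is_cycleOf hxs hc).symm)
    · refine ⟨Quot.mk _ x, ?_⟩
      show fn x = _
      rw [hpos x hx]
  have hcard : Fintype.card (Quotient (scS σ)) = Fintype.card T :=
    Fintype.card_of_bijective ⟨hinj, hsurj⟩
  have hT : Fintype.card T
      = Fintype.card {c : Equiv.Perm (Fin n) // c ∈ σ.cycleFactorsFinset}
        + Fintype.card {x : Fin n // σ x = x} := Fintype.card_sum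
  have hcyc2 : σ.cycleType.card = σ.cycleFactorsFinset.card := by
    rw [Equiv.Perm.cycleType_def, Multiset.card_map]
    rfl
  have hcyc : Fintype.card {c : Equiv.Perm (Fin n) // c ∈ σ.cycleFactorsFinset}
      = σ.cycleType.card := by
    rw [hcyc2]
    exact Fintype.card_coe _
  have hfp : Fintype.card {x : Fin n // σ x = x} = n - σ.support.card := by
    have he : Fintype.card {x : Fin n // σ x = x} = (σ.supportᶜ).card := by
      rw [← Fintype.card_coe (σ.supportᶜ)]
      apply Fintype.card_congr
      apply Equiv.subtypeEquivRight
      intro x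
      rw [Finset.mem_compl, Equiv.Perm.notMem_support]
    rw [he, Finset.card_compl, Fintype.card_fin]
  rw [korb, nclasses, hcard, hT, hcyc, hfp, kappa_eq]

lemma korb_one {n : ℕ} : korb (1 : Equiv.Perm (Fin n)) = n := by
  rw [korb_eq_kappa, kappa_eq]
  simp

lemma korb_lt_of_ne_one {n : ℕ} {τ : Equiv.Perm (Fin n)} (h : τ ≠ 1) : korb τ < n := by
  rw [korb_eq_kappa, kappa_eq]
  have h1 : 1 < τ.support.card := Equiv.Perm.one_lt_card_support_of_ne_one h
  have h2 : τ.support.card ≤ n := by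
    have := Finset.card_le_univ τ.support
    simpa using this
  have h3' : ∀ x ∈ τ.cycleType, 2 ≤ x := fun _ hx => Equiv.Perm.two_le_of_mem_cycleType hx
  have h3 : τ.cycleType.card * 2 ≤ τ.cycleType.sum := by
    have := Multiset.card_nsmul_le_sum h3'
    simpa [smul_eq_mul] using this
  have h4 := Equiv.Perm.sum_cycleType τ
  omega

lemma mainlemma {n : ℕ} : ∀ (k : ℕ) (σ τ : Equiv.Perm (Fin n)), n - korb τ ≤ k →
    ∃ g : ℕ, (korb σ : ℤ) + korb τ + korb (σ * τ) - n
      - 2 * nclasses (orbS (Subgroup.closure {σ, τ})) = -2 * g := by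
  have base : ∀ σ : Equiv.Perm (Fin n),
      ∃ g : ℕ, (korb σ : ℤ) + korb (1 : Equiv.Perm (Fin n))
        + korb (σ * 1) - n
        - 2 * nclasses (orbS (Subgroup.closure {σ, (1 : Equiv.Perm (Fin n))})) = -2 * g := by
    intro σ
    have h1 : korb (σ * 1) = korb σ := by rw [mul_one]
    have h2 : korb (1 : Equiv.Perm (Fin n)) = n := korb_one
    have h3 : nclasses (orbS (Subgroup.closure {σ, (1 : Equiv.Perm (Fin n))})) = korb σ :=
      nclasses_congr (orbS_closure_pair_one σ)
    exact ⟨0, by rw [h1, h2, h3]; push_cast; ring⟩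
  intro k
  induction k with
  | zero =>
    intro σ τ hbound
    rcases eq_or_ne τ 1 with rfl | hτ
    · exact base σ
    · exact absurd (korb_lt_of_ne_one hτ) (by omega)
  | succ k ih =>
    intro σ τ hbound
    rcases eq_or_ne τ 1 with rfl | hτ
    · exact base σ
    · obtain ⟨a, ha⟩ : ∃ a, τ a ≠ a := by
        by_contra hcon
        push_neg at hcon
        exact hτ (Equiv.ext hcon)
      have hab : a ≠ τ a := fun hcc => ha hcc.symm
      have hsc : τ.SameCycle a (τ a) := ⟨1, by rw [zpow_one]⟩
      have hτt : (τ * Equiv.swap a (τ a)) * Equiv.swap a (τ a) = τ := by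
        rw [mul_assoc, Equiv.swap_mul_self, mul_one]
      have hκτ : korb (τ * Equiv.swap a (τ a)) = korb τ + 1 := korb_mul_swap_of_same hab hsc
      have hbound' : n - korb (τ * Equiv.swap a (τ a)) ≤ k := by omega
      obtain ⟨g', hg'⟩ := ih σ (τ * Equiv.swap a (τ a)) hbound'
      have hGrel : orbS (Subgroup.closure
            (insert (Equiv.swap a (τ a)) ({σ, τ} : Set (Equiv.Perm (Fin n)))))
          = orbS (Subgroup.closure {σ, τ}) := by
        rw [orbS_closure_insert_swap]
        exact joinS_eq ⟨τ, Subgroup.subset_closure (by simp), rfl⟩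
      have hc : nclasses (orbS (Subgroup.closure ({σ, τ} : Set (Equiv.Perm (Fin n)))))
          = nclasses (joinS (orbS (Subgroup.closure {σ, τ * Equiv.swap a (τ a)})) a (τ a)) := by
        rw [← nclasses_congr hGrel]
        apply nclasses_congr
        rw [closure_insert_swap_eq σ τ a (τ a)]
        exact orbS_closure_insert_swap _ a (τ a)
      have hστ : σ * τ = (σ * (τ * Equiv.swap a (τ a))) * Equiv.swap a (τ a) := by
        rw [mul_assoc, mul_assoc, Equiv.swap_mul_self, mul_one]
      by_cases hsc2 : (σ * (τ * Equiv.swap a (τ a))).SameCycle a (τ a)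
      · have hκστ : korb (σ * τ) = korb (σ * (τ * Equiv.swap a (τ a))) + 1 := by
          rw [hστ]; exact korb_mul_swap_of_same hab hsc2
        have hrel' : (orbS (Subgroup.closure
            ({σ, τ * Equiv.swap a (τ a)} : Set (Equiv.Perm (Fin n))))).r a (τ a) :=
          sameCycle_le_orbS
            (mul_mem (Subgroup.subset_closure (by simp)) (Subgroup.subset_closure (by simp)))
            hsc2
        have hcc : nclasses (orbS (Subgroup.closure ({σ, τ} : Set (Equiv.Perm (Fin n)))))
            = nclasses (orbS (Subgroup.closure {σ, τ * Equiv.swap a (τ a)})) := by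
          rw [hc]
          exact nclasses_congr (joinS_eq hrel')
        refine ⟨g', ?_⟩
        push_cast at hg' ⊢
        omega
      · have hκστ : korb (σ * τ) + 1 = korb (σ * (τ * Equiv.swap a (τ a))) := by
          rw [hστ]; exact korb_mul_swap_of_not hab hsc2
        by_cases hrel' : (orbS (Subgroup.closure
            ({σ, τ * Equiv.swap a (τ a)} : Set (Equiv.Perm (Fin n))))).r a (τ a)
        · have hcc : nclasses (orbS (Subgroup.closure ({σ, τ} : Set (Equiv.Perm (Fin n)))))
              = nclasses (orbS (Subgroup.closure {σ, τ * Equiv.swap a (τ a)})) := by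
            rw [hc]
            exact nclasses_congr (joinS_eq hrel')
          refine ⟨g' + 1, ?_⟩
          push_cast at hg' ⊢
          omega
        · have hcc : nclasses (orbS (Subgroup.closure ({σ, τ} : Set (Equiv.Perm (Fin n))))) + 1
              = nclasses (orbS (Subgroup.closure {σ, τ * Equiv.swap a (τ a)})) := by
            rw [hc]
            exact nclasses_joinS _ hrel'
          refine ⟨g', ?_⟩
          push_cast at hg' ⊢
          omega

end KappaOrb



/-- Euler characteristic relation for transitive permutation triples. -/
theorem stmt2 (n : ℕ) (α β : Equiv.Perm (Fin n))
    (htrans : ∀ x y : Fin n,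
      ∃ g ∈ Subgroup.closure ({α, β} : Set (Equiv.Perm (Fin n))), g x = y) :
    ∃ g : ℕ, (kappa α : ℤ) + (kappa β : ℤ) - n + (kappa (α * β) : ℤ) = 2 - 2 * g := by
  rcases Nat.eq_zero_or_pos n with rfl | hn
  · refine ⟨1, ?_⟩
    have hz : ∀ σ : Equiv.Perm (Fin 0), kappa σ = 0 := by
      intro σ
      have : σ = 1 := Subsingleton.elim σ 1
      subst this
      simp [kappa, fullCycleType]
    rw [hz, hz, hz]
    norm_num
  · obtain ⟨g, hg⟩ := mainlemma n α β (Nat.sub_le n _)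
    have hcl : Stmt2Aux.nclasses (Stmt2Aux.orbS (Subgroup.closure {α, β})) = 1 := by
      have x0 : Fin n := ⟨0, hn⟩
      refine Fintype.card_eq_one_iff.2 ⟨Quot.mk _ x0, ?_⟩
      intro u
      induction u using Quot.ind with | _ y =>
      apply Quot.sound
      obtain ⟨g, hg1, hg2⟩ := htrans y x0
      exact ⟨g, hg1, hg2⟩
    rw [hcl] at hg
    simp only [korb_eq_kappa] at hg
    refine ⟨g, ?_⟩
    push_cast at hg ⊢
    omega
end
end

section
/- Let n ≥ 2p + 2 and λ = [1^j, 2^k, p−k+1, n−j−k−p−1] be a partition of n with 0 ≤ k ≤ p−1 and 0 ≤ j ≤ n−2p−2. Then χ^λ evaluated at the conjugacy class of cycle type [p, n−p] equals (−1)^{j+1}. -/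
open Equiv Finset

noncomputable section
open scoped Classical

/-! ### Auxiliary lemmas for stmt4 -/

open MvPolynomial in
lemma stmt4_prod_pairs {M : Type*} [CommMonoid M] (n : ℕ) (f : Fin n → Fin n → M) :
    ∏ p ∈ Finset.univ.filter (fun p : Fin n × Fin n => p.1 < p.2), f p.1 p.2
      = ∏ i : Fin n, ∏ j ∈ Finset.Ioi i, f i j := by
  rw [Finset.prod_filter, ← Finset.univ_product_univ, Finset.prod_product]
  refine Finset.prod_congr rfl fun i _ => ?_
  rw [← Finset.prod_filter]
  congr 1
  exact Finset.filter_lt_eq_Ioi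

open MvPolynomial in
lemma stmt4_vdm_eq_det (n : ℕ) :
    vdm n = Matrix.det (Matrix.vandermonde (fun i : Fin n => X i.rev)) := by
  rw [Matrix.det_vandermonde, ← stmt4_prod_pairs n (fun i j => X j.rev - X i.rev), vdm]
  refine Finset.prod_nbij' (fun p => (p.2.rev, p.1.rev)) (fun p => (p.2.rev, p.1.rev)) ?_ ?_ ?_ ?_ ?_
  · intro p hp; simp only [Finset.mem_filter, Finset.mem_univ, true_and] at *
    exact (Fin.rev_lt_rev).mpr hp
  · intro p hp; simp only [Finset.mem_filter, Finset.mem_univ, true_and] at *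
    exact (Fin.rev_lt_rev).mpr hp
  · intro p hp; simp [Fin.rev_rev]
  · intro p hp; simp [Fin.rev_rev]
  · intro p hp; simp [Fin.rev_rev]

open MvPolynomial in
lemma stmt4_prod_X_pow (n : ℕ) (g : Fin n → Fin n) (e : Fin n → ℕ) :
    (∏ b : Fin n, (X (g b) ^ (e b) : MvPolynomial (Fin n) ℤ))
      = monomial (∑ b : Fin n, Finsupp.single (g b) (e b)) (1 : ℤ) := by
  rw [monomial_sum_index, map_one, one_mul]
  exact Finset.prod_congr rfl fun b _ => by rw [X_pow_eq_monomial]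

open MvPolynomial in
lemma stmt4_vdm_expand (n : ℕ) :
    vdm n = ∑ τ : Equiv.Perm (Fin n), (Equiv.Perm.sign τ : ℤ) •
      monomial (∑ b : Fin n, Finsupp.single (τ b) (n - 1 - (b : ℕ))) (1 : ℤ) := by
  rw [stmt4_vdm_eq_det, Matrix.det_apply]
  have hrr : ∀ σ : Equiv.Perm (Fin n),
      Fin.revPerm * (Fin.revPerm * σ * Fin.revPerm) * Fin.revPerm = σ := by
    intro σ; ext x; simp [Equiv.Perm.mul_apply, Fin.rev_rev]
  let eqv : Equiv.Perm (Fin n) ≃ Equiv.Perm (Fin n) :=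
    ⟨fun σ => Fin.revPerm * σ * Fin.revPerm, fun σ => Fin.revPerm * σ * Fin.revPerm,
     fun σ => hrr σ, fun σ => hrr σ⟩
  rw [← Equiv.sum_comp eqv]
  refine Finset.sum_congr rfl fun σ _ => ?_
  have hsign : Equiv.Perm.sign (eqv σ) = Equiv.Perm.sign σ := by
    simp only [eqv, Equiv.coe_fn_mk, map_mul]
    have h2 := Int.units_mul_self (Equiv.Perm.sign (Fin.revPerm : Equiv.Perm (Fin n)))
    rw [mul_comm (Equiv.Perm.sign (Fin.revPerm : Equiv.Perm (Fin n))) (Equiv.Perm.sign σ),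
      mul_assoc, h2, mul_one]
  rw [hsign]
  congr 1
  have h1 : ∀ i : Fin n, Matrix.vandermonde (fun i : Fin n => X i.rev) (eqv σ i) i
      = (X (σ i.rev) ^ (i : ℕ) : MvPolynomial (Fin n) ℤ) := by
    intro i
    simp [eqv, Matrix.vandermonde, Fin.rev_rev, Equiv.Perm.mul_apply]
  rw [Finset.prod_congr rfl fun i _ => h1 i]
  rw [← Equiv.prod_comp (Fin.revPerm : Equiv.Perm (Fin n))
    (fun i => (X (σ i.rev) ^ (i : ℕ) : MvPolynomial (Fin n) ℤ))]
  simp only [Fin.revPerm_apply, Fin.rev_rev, Fin.val_rev]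
  rw [stmt4_prod_X_pow]
  have heq : (∑ b : Fin n, Finsupp.single (σ b) (n - ((b : ℕ) + 1)))
      = ∑ b : Fin n, Finsupp.single (σ b) (n - 1 - (b : ℕ)) :=
    Finset.sum_congr rfl fun b _ => by congr 1; omega
  rw [heq]

lemma stmt4_sum_single_apply (n : ℕ) (τ : Equiv.Perm (Fin n)) (e : Fin n → ℕ) (a : Fin n) :
    (∑ b : Fin n, Finsupp.single (τ b) (e b)) a = e (τ⁻¹ a) := by
  rw [Finset.sum_apply']
  rw [Finset.sum_eq_single (τ⁻¹ a)]
  · rw [Finsupp.single_apply, if_pos (by simp)]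
  · intro b _ hb
    rw [Finsupp.single_apply, if_neg]
    intro h
    exact hb (by simpa using congrArg τ.symm h)
  · simp

lemma stmt4_coeff_vdm (n : ℕ) (d : Fin n →₀ ℕ) :
    MvPolynomial.coeff d (vdm n)
      = ∑ τ : Equiv.Perm (Fin n), (Equiv.Perm.sign τ : ℤ) *
          (if ∀ a : Fin n, (d a : ℕ) = n - 1 - ((τ a : ℕ)) then 1 else 0) := by
  rw [stmt4_vdm_expand, MvPolynomial.coeff_sum]
  rw [← Equiv.sum_comp (Equiv.inv (Equiv.Perm (Fin n)))]
  refine Finset.sum_congr rfl fun τ _ => ?_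
  simp only [Equiv.inv_apply]
  rw [MvPolynomial.coeff_smul, MvPolynomial.coeff_monomial, Equiv.Perm.sign_inv]
  have hcond : ((∑ b : Fin n, Finsupp.single (τ⁻¹ b) (n - 1 - (b : ℕ))) = d)
      ↔ (∀ a : Fin n, (d a : ℕ) = n - 1 - ((τ a : ℕ))) := by
    rw [DFunLike.ext_iff]
    constructor
    · intro h a
      have h2 := h a
      rw [stmt4_sum_single_apply, inv_inv] at h2
      exact h2.symm
    · intro h a
      rw [stmt4_sum_single_apply, inv_inv]
      exact (h a).symm
  rw [if_congr hcond rfl rfl]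
  simp [smul_eq_mul]

def stmt4_subEquiv (n c : ℕ) (h : c ≤ n) : Fin c ≃ {x : Fin n // (x : ℕ) < c} where
  toFun := fun a => ⟨⟨a, lt_of_lt_of_le a.2 h⟩, a.2⟩
  invFun := fun x => ⟨x.1, x.2⟩
  left_inv := fun a => rfl
  right_inv := fun x => rfl

def stmt4_rot (n m : ℕ) (h : m + 1 ≤ n) : Equiv.Perm (Fin n) :=
  ((finRotate (m+1))⁻¹).extendDomain (stmt4_subEquiv n (m+1) h)

lemma stmt4_rot_sign (n m : ℕ) (h : m + 1 ≤ n) :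
    Equiv.Perm.sign (stmt4_rot n m h) = (-1) ^ m := by
  rw [stmt4_rot, Equiv.Perm.sign_extendDomain, Equiv.Perm.sign_inv, sign_finRotate, Nat.add_sub_cancel]

lemma stmt4_rot_val (n m : ℕ) (h : m + 1 ≤ n) (a : Fin n) :
    ((stmt4_rot n m h a : Fin n) : ℕ)
      = if (a : ℕ) < m + 1 then (if (a : ℕ) = 0 then m else (a : ℕ) - 1) else a := by
  by_cases ha : (a : ℕ) < m + 1
  · rw [if_pos ha, stmt4_rot,
      Equiv.Perm.extendDomain_apply_subtype (p := fun x : Fin n => (x : ℕ) < m + 1) _ _ ha]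
    have key : ∀ x : Fin (m+1), (((finRotate (m+1))⁻¹ x : Fin (m+1)) : ℕ)
        = if (x : ℕ) = 0 then m else (x : ℕ) - 1 := by
      intro x
      have hx : (finRotate (m+1))⁻¹ x = x - 1 := by
        apply (finRotate (m+1)).injective
        simp only [Equiv.Perm.inv_def, Equiv.apply_symm_apply, finRotate_succ_apply, sub_add_cancel]
      rw [hx, Fin.coe_sub_one]
      split <;> rename_i h0 <;> simp only [Fin.ext_iff, Fin.val_zero] at h0 <;> simp [h0]
    simp only [stmt4_subEquiv, Equiv.coe_fn_mk, Equiv.coe_fn_symm_mk]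
    rw [key]
  · rw [if_neg ha, stmt4_rot,
      Equiv.Perm.extendDomain_apply_not_subtype (p := fun x : Fin n => (x : ℕ) < m + 1) _ _ ha]

def stmt4_tau0 (n j k : ℕ) (h1 : k + 1 ≤ n) (h2 : k + j + 1 + 1 ≤ n) : Equiv.Perm (Fin n) :=
  stmt4_rot n k h1 * stmt4_rot n (k + j + 1) h2

lemma stmt4_tau0_sign (n j k : ℕ) (h1 : k + 1 ≤ n) (h2 : k + j + 1 + 1 ≤ n) :
    Equiv.Perm.sign (stmt4_tau0 n j k h1 h2) = (-1) ^ (j + 1) := by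
  rw [stmt4_tau0, Equiv.Perm.sign_mul, stmt4_rot_sign, stmt4_rot_sign]
  have h3 : k + (k + j + 1) = 2 * k + (j + 1) := by omega
  rw [← pow_add, h3, pow_add, pow_mul, neg_one_sq, one_pow, one_mul]

lemma stmt4_tau0_val (n j k : ℕ) (h1 : k + 1 ≤ n) (h2 : k + j + 1 + 1 ≤ n) (a : Fin n) :
    ((stmt4_tau0 n j k h1 h2) a : ℕ) =
      if (a : ℕ) = 0 then k + j + 1
      else if (a : ℕ) = 1 then k
      else if (a : ℕ) < k + 2 then (a : ℕ) - 2
      else if (a : ℕ) < k + j + 2 then (a : ℕ) - 1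
      else (a : ℕ) := by
  have hb := stmt4_rot_val n (k + j + 1) h2 a
  rw [stmt4_tau0, Equiv.Perm.mul_apply]
  set b := stmt4_rot n (k + j + 1) h2 a with hbdef
  have ha := stmt4_rot_val n k h1 b
  rw [ha]
  split_ifs at hb ⊢ <;> omega

/-- character of `[1^j, 2^k, p-k+1, n-j-k-p-1]` on the class `[p, n-p]`. -/
theorem stmt4 (n p j k : ℕ) (hp : 0 < p) (hn : 2 * p + 2 ≤ n)
    (hk : k ≤ p - 1) (hj : j ≤ n - 2 * p - 2)
    (lam mu : Nat.Partition n)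
    (hlam : lam.parts =
      Multiset.replicate j 1 + Multiset.replicate k 2 + {p - k + 1, n - j - k - p - 1})
    (hmu : mu.parts = {p, n - p}) :
    chi lam mu = (-1 : ℤ) ^ (j + 1) := by
  have hkp : k + 1 ≤ p := by omega
  have hjn : j + 2 * p + 2 ≤ n := by omega
  -- sorted parts
  have hL : sortedParts lam
      = [n-j-k-p-1, p-k+1] ++ (List.replicate k 2 ++ List.replicate j 1) := by
    have hs : lam.parts.sort (· ≤ ·)
        = (List.replicate j 1 ++ (List.replicate k 2 ++ [p-k+1, n-j-k-p-1])) := by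
      refine (fun h1 h2 h3 => List.Perm.eq_of_pairwise' (r := (· ≤ ·)) h2 h3 h1) ?_ ?_ ?_
      · rw [← Multiset.coe_eq_coe, Multiset.sort_eq, hlam]
        simp only [← Multiset.coe_add, ← Multiset.coe_replicate, List.append_assoc]
        rw [add_assoc]
        rfl
      · exact Multiset.pairwise_sort _ _
      · show List.Pairwise _ _
        simp only [List.pairwise_append, List.pairwise_replicate, List.mem_replicate,
          List.pairwise_cons, List.mem_cons, List.mem_singleton]
        refine ⟨by omega, ⟨by omega, ?_, ?_⟩, ?_⟩ <;> intros <;> simp_all <;> omega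
    rw [sortedParts, hs, List.reverse_append, List.reverse_append]
    simp [List.reverse_replicate]
  have hpart : ∀ a : ℕ, partFn lam a =
      if a = 0 then n-j-k-p-1 else if a = 1 then p-k+1 else if a < k+2 then 2
      else if a < k+j+2 then 1 else 0 := by
    have hgetD : ∀ a : ℕ, (List.replicate k 2 ++ List.replicate j 1).getD a 0
        = if a < k then 2 else if a < k + j then 1 else 0 := by
      intro a
      by_cases h1 : a < k
      · rw [List.getD_append _ _ _ _ (by simpa using h1), if_pos h1,
          List.getD_eq_getElem _ _ (by simpa using h1), List.getElem_replicate]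
      · rw [List.getD_append_right _ _ _ _ (by simpa using h1)]
        by_cases h2 : a < k + j
        · rw [if_neg h1, if_pos h2,
            List.getD_eq_getElem _ _ (by simp; omega), List.getElem_replicate]
        · rw [if_neg h1, if_neg h2, List.getD_eq_default]
          simp only [List.length_replicate]
          omega
    intro a
    rw [partFn, hL]
    match a with
    | 0 => rfl
    | 1 => rfl
    | (a+2) =>
      show (List.replicate k 2 ++ List.replicate j 1).getD a 0 = _
      rw [hgetD]
      split_ifs <;> (try contradiction) <;> omega
  -- the exponent Finsupp
  set M : Fin n →₀ ℕ :=
    Finsupp.equivFunOnFinite.symm (fun i : Fin n => partFn lam i + (n - 1 - (i : ℕ))) with hMdef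
  have hM : ∀ a : Fin n, M a = partFn lam (a : ℕ) + (n - 1 - (a : ℕ)) := by
    intro a; rw [hMdef]; rfl
  -- distinguished indices
  have h0n : 0 < n := by omega
  have h1n : 1 < n := by omega
  set i0 : Fin n := ⟨0, h0n⟩ with hi0
  set i1 : Fin n := ⟨1, h1n⟩ with hi1
  -- the permutation
  have ht1 : k + 1 ≤ n := by omega
  have ht2 : k + j + 1 + 1 ≤ n := by omega
  set τ0 := stmt4_tau0 n j k ht1 ht2 with hτ0
  -- value of subtractions
  have hval : ∀ (i i' : Fin n) (a : Fin n),
      (M - (Finsupp.single i p + Finsupp.single i' (n-p))) a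
        = M a - ((if i = a then p else 0) + (if i' = a then n - p else 0)) := by
    intro i i' a
    rw [Finsupp.tsub_apply, Finsupp.add_apply, Finsupp.single_apply, Finsupp.single_apply]
  -- key: the condition forces (i, i') = (i1, i0)
  have hkey : ∀ (i i' : Fin n) (τ : Equiv.Perm (Fin n)),
      (∀ a : Fin n, ((M - (Finsupp.single i p + Finsupp.single i' (n-p))) a : ℕ)
        = n - 1 - ((τ a : ℕ))) → i = i1 ∧ i' = i0 := by
    intro i i' τ hc
    have hc0 := hc i0
    have hc1 := hc i1
    rw [hval, hM, hpart] at hc0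
    rw [hval, hM, hpart] at hc1
    have hv0 : (i0 : ℕ) = 0 := rfl
    have hv1 : (i1 : ℕ) = 1 := rfl
    rw [hv0] at hc0
    rw [hv1] at hc1
    norm_num at hc0 hc1
    have hb0 := (τ i0).isLt
    have hb1 := (τ i1).isLt
    have hor0 : i = i0 ∨ i' = i0 := by
      by_contra hcon
      push_neg at hcon
      rw [if_neg hcon.1, if_neg hcon.2] at hc0
      omega
    have hor1 : i = i1 ∨ i' = i1 := by
      by_contra hcon
      push_neg at hcon
      rw [if_neg hcon.1, if_neg hcon.2] at hc1
      omega
    have hne : i0 ≠ i1 := by simp [hi0, hi1, Fin.ext_iff]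
    rcases hor0 with h0 | h0 <;> rcases hor1 with h1 | h1
    · exact absurd (h0.symm.trans h1) hne
    · -- case i = i0, i' = i1 : contradiction
      exfalso
      subst h0 h1
      rw [if_pos rfl, if_neg (Ne.symm hne)] at hc0
      rw [if_neg hne, if_pos rfl] at hc1
      have hτ1 : (τ i1 : ℕ) = n - 2*p + k := by omega
      have han : n - 2*p + k < n := by omega
      set a' : Fin n := ⟨n - 2*p + k, han⟩ with ha'
      have hca := hc a'
      rw [hval, hM, hpart] at hca
      have hav : (a' : ℕ) = n - 2*p + k := rfl
      rw [hav] at hca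
      have hai : i0 ≠ a' := by
        intro h
        have h2 := congrArg Fin.val h
        rw [hav, hv0] at h2
        omega
      have hai' : i1 ≠ a' := by
        intro h
        have h2 := congrArg Fin.val h
        rw [hav, hv1] at h2
        omega
      rw [if_neg hai, if_neg hai'] at hca
      have hge : ¬(n - 2*p + k = 0) := by omega
      have hge1 : ¬(n - 2*p + k = 1) := by omega
      have hge2 : ¬(n - 2*p + k < k+2) := by omega
      have hge3 : ¬(n - 2*p + k < k+j+2) := by omega
      rw [if_neg hge, if_neg hge1, if_neg hge2, if_neg hge3] at hca
      have hba := (τ a').isLt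
      have hτa : (τ a' : ℕ) = n - 2*p + k := by omega
      have heq : i1 = a' := by
        apply τ.injective
        apply Fin.ext
        omega
      exact hai' heq
    · exact ⟨h1, h0⟩
    · exact absurd (h0.symm.trans h1) hne
  have hne01 : i0 ≠ i1 := by simp [hi0, hi1, Fin.ext_iff]
  have hv0 : (i0 : ℕ) = 0 := rfl
  have hv1 : (i1 : ℕ) = 1 := rfl
  -- expand chi
  have hmu2 : (Multiset.map (powSum n) mu.parts).prod = powSum n p * powSum n (n - p) := by
    rw [hmu]; simp
  have hexp : vdm n * (Multiset.map (powSum n) mu.parts).prod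
      = ∑ i : Fin n, ∑ i' : Fin n,
          vdm n * MvPolynomial.monomial (Finsupp.single i p + Finsupp.single i' (n-p)) (1 : ℤ) := by
    rw [hmu2, powSum, powSum, Finset.sum_mul_sum, Finset.mul_sum]
    refine Finset.sum_congr rfl fun i _ => ?_
    rw [Finset.mul_sum]
    refine Finset.sum_congr rfl fun i' _ => ?_
    rw [MvPolynomial.X_pow_eq_monomial, MvPolynomial.X_pow_eq_monomial,
      MvPolynomial.monomial_mul, mul_one]
  show MvPolynomial.coeff M (vdm n * (Multiset.map (powSum n) mu.parts).prod) = (-1 : ℤ)^(j+1)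
  rw [hexp]
  simp only [MvPolynomial.coeff_sum, MvPolynomial.coeff_mul_monomial']
  have hzero : ∀ (i i' : Fin n), ¬(i = i1 ∧ i' = i0) →
      (if (Finsupp.single i p + Finsupp.single i' (n-p)) ≤ M
        then MvPolynomial.coeff (M - (Finsupp.single i p + Finsupp.single i' (n-p))) (vdm n) * 1
        else 0) = 0 := by
    intro i i' hne2
    split_ifs with hle
    · rw [stmt4_coeff_vdm, mul_one]
      apply Finset.sum_eq_zero
      intro τ _
      rw [if_neg, mul_zero]
      intro hcond
      exact hne2 (hkey i i' τ hcond)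
    · rfl
  rw [Finset.sum_eq_single i1
    (fun i _ hi => Finset.sum_eq_zero fun i' _ => hzero i i' (fun hh => hi hh.1))
    (fun h => absurd (Finset.mem_univ i1) h)]
  rw [Finset.sum_eq_single i0
    (fun i' _ hi' => hzero i1 i' (fun hh => hi' hh.2))
    (fun h => absurd (Finset.mem_univ i0) h)]
  have hvle : (Finsupp.single i1 p + Finsupp.single i0 (n-p)) ≤ M := by
    rw [Finsupp.le_def]
    intro a
    rw [Finsupp.add_apply, Finsupp.single_apply, Finsupp.single_apply, hM, hpart]
    have hlt := a.isLt
    by_cases h1 : i1 = a <;> by_cases h0 : i0 = a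
    · exact absurd (h1.trans h0.symm) (Ne.symm hne01)
    · have ha1 : (a : ℕ) = 1 := by rw [← h1, hv1]
      rw [if_pos h1, if_neg h0, ha1]
      norm_num
      omega
    · have ha0 : (a : ℕ) = 0 := by rw [← h0, hv0]
      rw [if_neg h1, if_pos h0, ha0]
      norm_num
      omega
    · rw [if_neg h1, if_neg h0]
      split_ifs <;> omega
  rw [if_pos hvle, stmt4_coeff_vdm, mul_one]
  have hcond0 : ∀ a : Fin n, ((M - (Finsupp.single i1 p + Finsupp.single i0 (n-p))) a : ℕ)
      = n - 1 - ((τ0 a : ℕ)) := by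
    intro a
    rw [hval, hM, hpart, hτ0, stmt4_tau0_val]
    have hlt := a.isLt
    by_cases h1 : i1 = a <;> by_cases h0 : i0 = a
    · exact absurd (h1.trans h0.symm) (Ne.symm hne01)
    · have ha1 : (a : ℕ) = 1 := by rw [← h1, hv1]
      rw [if_pos h1, if_neg h0, ha1]
      norm_num
      omega
    · have ha0 : (a : ℕ) = 0 := by rw [← h0, hv0]
      rw [if_neg h1, if_pos h0, ha0]
      norm_num
      omega
    · have ha1 : ¬((a : ℕ) = 1) := fun h => h1 (Fin.ext (hv1.trans h.symm))
      have ha0 : ¬((a : ℕ) = 0) := fun h => h0 (Fin.ext (hv0.trans h.symm))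
      rw [if_neg h1, if_neg h0]
      split_ifs <;> omega
  rw [Finset.sum_eq_single τ0]
  · rw [if_pos hcond0, mul_one, hτ0, stmt4_tau0_sign]
    simp
  · intro τ _ hτne
    rw [if_neg, mul_zero]
    intro hcond
    apply hτne
    apply Equiv.ext
    intro x
    apply Fin.ext
    have e1 := hcond x
    have e2 := hcond0 x
    have hx1 := (τ x).isLt
    have hx2 := (τ0 x).isLt
    omega
  · intro h; exact absurd (Finset.mem_univ τ0) h
end
end

section
/- Let n ≥ 2p+2 and μ be a partition of n with smallest part at least p+1 and ℓ(μ) parts. For the hook partition λ = [1^j, n−j]: if 0 ≤ j ≤ p−1 then χ^λ(μ) = (−1)^j, and if n−p ≤ j ≤ n−1 then χ^λ(μ) = (−1)^{j+1−ℓ(μ)}. -/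
open Equiv Finset

noncomputable section
open scoped Classical

namespace Stmt5Aux
open MvPolynomial


def cycFun (a L x : ℕ) : ℕ := if a < x ∧ x ≤ a + L then x - 1 else if x = a then a + L else x

def cycInv (a L x : ℕ) : ℕ := if a ≤ x ∧ x < a + L then x + 1 else if x = a + L then a else x

/-- Cyclic permutation on the block `[a, a+L]` of `Fin n`: sends `a ↦ a+L` and
`i ↦ i-1` for `a < i ≤ a+L`, identity elsewhere (and identity if `a+L ≥ n`). -/
def cycPerm (n a L : ℕ) : Equiv.Perm (Fin n) where
  toFun i := if h : a + L < n then
      ⟨cycFun a L i, by unfold cycFun; split_ifs <;> omega⟩ else i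
  invFun i := if h : a + L < n then
      ⟨cycInv a L i, by unfold cycInv; split_ifs <;> omega⟩ else i
  left_inv i := by
    by_cases h : a + L < n
    · simp only [h, dif_pos]
      apply Fin.ext
      show cycInv a L (cycFun a L (i : ℕ)) = (i : ℕ)
      unfold cycFun cycInv; split_ifs <;> omega
    · simp only [h, dif_neg, not_false_iff]
  right_inv i := by
    by_cases h : a + L < n
    · simp only [h, dif_pos]
      apply Fin.ext
      show cycFun a L (cycInv a L (i : ℕ)) = (i : ℕ)
      unfold cycFun cycInv; split_ifs <;> omega
    · simp only [h, dif_neg, not_false_iff]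

lemma cycPerm_apply (n a L : ℕ) (h : a + L < n) (i : Fin n) :
    ((cycPerm n a L i : Fin n) : ℕ) = cycFun a L (i : ℕ) := by
  simp only [cycPerm, Equiv.coe_fn_mk, h, dif_pos]

lemma cycPerm_zero (n a : ℕ) : cycPerm n a 0 = 1 := by
  ext i
  by_cases h : a + 0 < n
  · rw [cycPerm_apply n a 0 h i]
    unfold cycFun; split_ifs <;> simp <;> omega
  · simp only [cycPerm, Equiv.coe_fn_mk, h, dif_neg, not_false_iff, Perm.one_apply]

lemma cycPerm_succ (n a L : ℕ) (h : a + L + 1 < n) :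
    cycPerm n a (L + 1) =
      Equiv.swap (⟨a + L, by omega⟩ : Fin n) ⟨a + L + 1, h⟩ * cycPerm n a L := by
  ext i
  rw [Perm.mul_apply, cycPerm_apply n a (L+1) (by omega) i, Equiv.swap_apply_def]
  have hv := cycPerm_apply n a L (by omega) i
  split_ifs <;>
    simp only [Fin.ext_iff, Fin.val_mk] at * <;>
    simp only [hv] at * <;> unfold cycFun at * <;> split_ifs at * <;> omega

lemma sign_cycPerm (n : ℕ) : ∀ L a : ℕ, a + L < n →
    Equiv.Perm.sign (cycPerm n a L) = (-1) ^ L := by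
  intro L
  induction L with
  | zero => intro a _; simp [cycPerm_zero]
  | succ L ih =>
    intro a h
    rw [cycPerm_succ n a L h, Equiv.Perm.sign_mul, ih a (by omega),
      Equiv.Perm.sign_swap (by simp [Fin.ext_iff])]
    rw [pow_succ, mul_comm]


open MvPolynomial

/-- double product over `i < j` as a product over the filtered pair set. -/
lemma prod_pairs {n : ℕ} {M : Type*} [CommMonoid M] (f : Fin n → Fin n → M) :
    ∏ p ∈ Finset.univ.filter (fun p : Fin n × Fin n => p.1 < p.2), f p.1 p.2
      = ∏ i : Fin n, ∏ j ∈ Finset.Ioi i, f i j := by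
  rw [Finset.prod_sigma']
  exact Finset.prod_bij' (fun p _ => (⟨p.1, p.2⟩ : Σ _ : Fin n, Fin n))
    (fun x _ => (x.1, x.2)) (by simp) (by simp) (by simp) (by simp) (by simp)

def pairN (n : ℕ) : ℕ :=
  (Finset.univ.filter (fun p : Fin n × Fin n => p.1 < p.2)).card

lemma vdm_eq_det (n : ℕ) :
    vdm n = (-1 : MvPolynomial (Fin n) ℤ) ^ pairN n *
      (Matrix.vandermonde (fun i : Fin n => (X i : MvPolynomial (Fin n) ℤ))).det := by
  rw [Matrix.det_vandermonde, ← prod_pairs (fun i j => (X j - X i : MvPolynomial (Fin n) ℤ))]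
  rw [vdm, pairN, ← Finset.prod_const, ← Finset.prod_mul_distrib]
  apply Finset.prod_congr rfl
  intro p _; ring

lemma rename_vdm {n : ℕ} (σ : Perm (Fin n)) :
    rename (σ : Fin n → Fin n) (vdm n) = ((Equiv.Perm.sign σ : ℤ) : MvPolynomial (Fin n) ℤ) * vdm n := by
  have h1 : rename (σ : Fin n → Fin n)
      (Matrix.vandermonde (fun i : Fin n => (X i : MvPolynomial (Fin n) ℤ))).det
      = ((Matrix.vandermonde fun i : Fin n => (X i : MvPolynomial (Fin n) ℤ)).map
          (rename (σ : Fin n → Fin n))).det :=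
    RingHom.map_det (rename (σ : Fin n → Fin n) : MvPolynomial (Fin n) ℤ →ₐ[ℤ] _).toRingHom _
  have h2 : ((Matrix.vandermonde fun i : Fin n => (X i : MvPolynomial (Fin n) ℤ)).map
          (rename (σ : Fin n → Fin n)))
      = ((Matrix.vandermonde fun i : Fin n => (X i : MvPolynomial (Fin n) ℤ)).submatrix σ id) := by
    ext i j
    simp [Matrix.vandermonde_apply, Matrix.map_apply, map_pow]
  have h3 := Matrix.det_permute σ (Matrix.vandermonde fun i : Fin n => (X i : MvPolynomial (Fin n) ℤ))
  rw [vdm_eq_det, map_mul, map_pow, map_neg, map_one, h1, h2, h3]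
  ring

lemma rename_powSum {n : ℕ} (σ : Perm (Fin n)) (k : ℕ) :
    rename (σ : Fin n → Fin n) (powSum n k) = powSum n k := by
  unfold powSum
  rw [map_sum]
  simp only [map_pow, rename_X]
  exact Equiv.sum_comp σ (fun i => (X i : MvPolynomial (Fin n) ℤ) ^ k)

/-- `vdm` times the power sums for the multiset `M`. -/
def PQ (n : ℕ) (M : Multiset ℕ) : MvPolynomial (Fin n) ℤ := vdm n * (M.map (powSum n)).prod

lemma rename_PQ {n : ℕ} (σ : Perm (Fin n)) (M : Multiset ℕ) :
    rename (σ : Fin n → Fin n) (PQ n M) = ((Equiv.Perm.sign σ : ℤ) : MvPolynomial (Fin n) ℤ) * PQ n M := by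
  unfold PQ
  rw [map_mul, rename_vdm, map_multiset_prod]
  rw [Multiset.map_map]
  have : Multiset.map ((rename (σ : Fin n → Fin n)) ∘ powSum n) M = Multiset.map (powSum n) M := by
    apply Multiset.map_congr rfl
    intro k _
    exact rename_powSum σ k
  rw [this]; ring


open MvPolynomial

def sym {n : ℕ} (w : Fin n → ℕ) : Fin n →₀ ℕ := Finsupp.equivFunOnFinite.symm w

@[simp] lemma sym_apply {n : ℕ} (w : Fin n → ℕ) (i : Fin n) : sym w i = w i := rfl

lemma coeff_perm {n : ℕ} (M : Multiset ℕ) (w : Fin n → ℕ) (τ : Perm (Fin n)) :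
    MvPolynomial.coeff (sym (w ∘ τ)) (PQ n M)
      = (Equiv.Perm.sign τ : ℤ) * MvPolynomial.coeff (sym w) (PQ n M) := by
  have h := MvPolynomial.coeff_rename_mapDomain (τ : Fin n → Fin n) τ.injective
    (PQ n M) (sym (w ∘ τ))
  have hd : Finsupp.mapDomain (τ : Fin n → Fin n) (sym (w ∘ τ)) = sym w := by
    ext x
    rw [show ((τ : Fin n → Fin n)) = (τ : Equiv.Perm (Fin n)) from rfl]
    rw [Finsupp.mapDomain_equiv_apply]
    simp
  rw [hd, rename_PQ] at h
  rw [← eq_intCast (MvPolynomial.C : ℤ →+* MvPolynomial (Fin n) ℤ) ((Equiv.Perm.sign τ : ℤ)),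
    MvPolynomial.coeff_C_mul] at h
  exact h.symm

lemma coeff_dup {n : ℕ} (M : Multiset ℕ) (w : Fin n → ℕ) (a b : Fin n) (hab : a ≠ b)
    (hw : w a = w b) : MvPolynomial.coeff (sym w) (PQ n M) = 0 := by
  have h := coeff_perm M w (Equiv.swap a b)
  have hww : w ∘ (Equiv.swap a b : Perm (Fin n)) = w := by
    funext x
    simp only [Function.comp_apply, Equiv.swap_apply_def]
    split_ifs with h1 h2 <;> simp_all
  rw [hww, Equiv.Perm.sign_swap hab] at h
  have : MvPolynomial.coeff (sym w) (PQ n M) = -MvPolynomial.coeff (sym w) (PQ n M) := by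
    simpa using h
  omega

lemma key {n : ℕ} (M : Multiset ℕ) (m : ℕ) (w : Fin n → ℕ) :
    MvPolynomial.coeff (sym w) (PQ n (m ::ₘ M)) =
      ∑ i : Fin n, if m ≤ w i then
        MvPolynomial.coeff (sym (Function.update w i (w i - m))) (PQ n M) else 0 := by
  have hPQ : PQ n (m ::ₘ M) = ∑ i : Fin n, PQ n M * MvPolynomial.monomial (Finsupp.single i m) 1 := by
    unfold PQ
    rw [Multiset.map_cons, Multiset.prod_cons, ← Finset.mul_sum]
    rw [show (powSum n m : MvPolynomial (Fin n) ℤ) = ∑ i : Fin n, MvPolynomial.monomial (Finsupp.single i m) 1 by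
      unfold powSum; simp [MvPolynomial.X_pow_eq_monomial]]
    ring
  rw [hPQ, MvPolynomial.coeff_sum]
  apply Finset.sum_congr rfl
  intro i _
  rw [MvPolynomial.coeff_mul_monomial']
  have hle : Finsupp.single i m ≤ sym w ↔ m ≤ w i := by
    rw [Finsupp.single_le_iff]; simp
  split_ifs with h1 h2 h3
  · rw [mul_one]
    congr 1
    ext x
    rw [Finsupp.tsub_apply]
    by_cases hx : x = i
    · simp [hx]
    · simp [hx, Function.update_apply, Finsupp.single_apply, Ne.symm hx]
  · exact absurd (hle.mp h1) h2
  · exact absurd (hle.mpr h3) h1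
  · rfl


open MvPolynomial

lemma sym_inj {n : ℕ} {v w : Fin n → ℕ} (h : sym v = sym w) : v = w := by
  funext x
  have := DFunLike.congr_fun h x
  simpa using this

lemma sign_revPerm_eq (n : ℕ) :
    ((Equiv.Perm.sign (Fin.revPerm : Perm (Fin n))) : ℤ) = (-1) ^ pairN n := by
  set v : Fin n → ℚ := fun i => (i : ℚ) with hv
  have h := Matrix.det_permute (Fin.revPerm : Perm (Fin n)) (Matrix.vandermonde v)
  have h1 : (Matrix.vandermonde v).submatrix (Fin.revPerm : Perm (Fin n)) id
      = Matrix.vandermonde (v ∘ Fin.rev) := by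
    ext i j; simp [Matrix.vandermonde_apply, Matrix.submatrix_apply]
  have h2 : (Matrix.vandermonde (v ∘ Fin.rev)).det = (-1 : ℚ) ^ pairN n * (Matrix.vandermonde v).det := by
    rw [Matrix.det_vandermonde, Matrix.det_vandermonde]
    simp only [Function.comp_apply]
    rw [← prod_pairs (fun i j => v (Fin.rev j) - v (Fin.rev i)),
      ← prod_pairs (fun i j => v j - v i), pairN, ← Finset.prod_const,
      ← Finset.prod_mul_distrib]
    apply Finset.prod_congr rfl
    intro p hp
    have hlt : (p.1 : ℕ) < (p.2 : ℕ) := by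
      simpa using (Finset.mem_filter.mp hp).2
    have hr1 : ((Fin.rev p.1 : Fin n) : ℚ) = (n : ℚ) - 1 - ((p.1 : ℕ) : ℚ) := by
      rw [Fin.val_rev]
      have : ((p.1 : ℕ) : ℚ) + 1 ≤ (n : ℚ) := by exact_mod_cast (by omega : (p.1 : ℕ) + 1 ≤ n)
      push_cast [Nat.cast_sub (by omega : (p.1 : ℕ) + 1 ≤ n)]
      ring
    have hr2 : ((Fin.rev p.2 : Fin n) : ℚ) = (n : ℚ) - 1 - ((p.2 : ℕ) : ℚ) := by
      rw [Fin.val_rev]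
      push_cast [Nat.cast_sub (by omega : (p.2 : ℕ) + 1 ≤ n)]
      ring
    simp only [hv, hr1, hr2]
    ring
  have hne : (Matrix.vandermonde v).det ≠ 0 := by
    rw [Matrix.det_vandermonde]
    apply Finset.prod_ne_zero_iff.mpr
    intro i _
    apply Finset.prod_ne_zero_iff.mpr
    intro j hj
    have hij : (i : ℕ) < (j : ℕ) := by simpa using hj
    have hij' : ((i : ℕ) : ℚ) < ((j : ℕ) : ℚ) := by exact_mod_cast hij
    simp only [hv]; intro hc; rw [sub_eq_zero] at hc; exact absurd hc (by exact_mod_cast (by omega : ¬ ((j:ℕ) = (i:ℕ))))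
  rw [h1, h2] at h
  have h' := mul_right_cancel₀ hne h
  exact_mod_cast h'.symm

lemma prod_X_pow_univ {n : ℕ} (e : Fin n → ℕ) :
    ∏ x : Fin n, (X x : MvPolynomial (Fin n) ℤ) ^ e x = monomial (sym e) 1 := by
  rw [← prod_X_pow_eq_monomial]
  exact (Finset.prod_subset (Finset.subset_univ _)
    (fun x _ hx => by rw [show e x = 0 from Finsupp.notMem_support_iff.mp hx, pow_zero])).symm

lemma coeff_delta_vdm (n : ℕ) :
    MvPolynomial.coeff (sym fun i : Fin n => n - 1 - (i : ℕ)) (vdm n) = 1 := by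
  have hexp : ∀ σ : Perm (Fin n),
      (∏ i : Fin n, (Matrix.vandermonde (fun i : Fin n => (X i : MvPolynomial (Fin n) ℤ))) (σ i) i)
        = monomial (sym fun x : Fin n => ((σ.symm x : Fin n) : ℕ)) 1 := by
    intro σ
    rw [← prod_X_pow_univ]
    rw [← Equiv.prod_comp σ (fun x => (X x : MvPolynomial (Fin n) ℤ) ^ ((σ.symm x : Fin n) : ℕ))]
    apply Finset.prod_congr rfl
    intro i _
    simp [Matrix.vandermonde_apply]
  rw [vdm_eq_det, Matrix.det_apply']
  rw [Finset.mul_sum, MvPolynomial.coeff_sum]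
  have hterm : ∀ σ : Perm (Fin n),
      ((-1 : MvPolynomial (Fin n) ℤ) ^ pairN n *
        (((Equiv.Perm.sign σ : ℤ) : MvPolynomial (Fin n) ℤ) * ∏ i, (Matrix.vandermonde (fun i : Fin n => (X i : MvPolynomial (Fin n) ℤ))) (σ i) i))
      = monomial (sym fun x : Fin n => ((σ.symm x : Fin n) : ℕ)) ((-1)^pairN n * (Equiv.Perm.sign σ : ℤ)) := by
    intro σ
    rw [hexp σ]
    rw [← eq_intCast (MvPolynomial.C : ℤ →+* MvPolynomial (Fin n) ℤ) ((Equiv.Perm.sign σ : ℤ))]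
    rw [show ((-1 : MvPolynomial (Fin n) ℤ) ^ pairN n) = MvPolynomial.C ((-1 : ℤ)^ pairN n) by
      rw [map_pow, map_neg, map_one]]
    rw [← mul_assoc, ← C_mul, C_mul_monomial, mul_one]
  have hmain : ∑ σ : Perm (Fin n),
      MvPolynomial.coeff (sym fun i : Fin n => n - 1 - (i : ℕ))
        ((-1 : MvPolynomial (Fin n) ℤ) ^ pairN n *
          (((Equiv.Perm.sign σ : ℤ) : MvPolynomial (Fin n) ℤ) * ∏ i, (Matrix.vandermonde (fun i : Fin n => (X i : MvPolynomial (Fin n) ℤ))) (σ i) i))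
      = (-1)^pairN n * (Equiv.Perm.sign (Fin.revPerm : Perm (Fin n)) : ℤ) := by
    rw [Finset.sum_eq_single (Fin.revPerm : Perm (Fin n))]
    · rw [hterm, MvPolynomial.coeff_monomial, if_pos]
      congr 1
      funext x
      show ((Fin.rev x : Fin n) : ℕ) = n - 1 - (x : ℕ)
      rw [Fin.val_rev]; omega
    · intro σ _ hσ
      rw [hterm, MvPolynomial.coeff_monomial, if_neg]
      intro hc
      apply hσ
      have hfun := sym_inj hc
      have : σ.symm = (Fin.revPerm : Perm (Fin n)) := by
        apply Equiv.ext
        intro x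
        have hx := congrFun hfun x
        apply Fin.ext
        rw [hx]
        show n - 1 - (x : ℕ) = ((Fin.rev x : Fin n) : ℕ)
        rw [Fin.val_rev]; omega
      calc σ = (σ.symm).symm := by simp
        _ = (Fin.revPerm : Perm (Fin n)).symm := by rw [this]
        _ = Fin.revPerm := rfl
    · intro h; exact absurd (Finset.mem_univ _) h
  rw [hmain, sign_revPerm_eq]
  rw [← pow_add]
  rw [show pairN n + pairN n = 2 * pairN n by ring, pow_mul]
  norm_num


open MvPolynomial

lemma PQ_zero (n : ℕ) : PQ n 0 = vdm n := by simp [PQ]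

/-- exponent vector of the hook `[1^j, (n-j)+b-(n-j)]`... : `λ+δ` for the partial hook
with first part `b` and `j` ones (positions `1..j`). -/
def Ufn (n j b : ℕ) : Fin n → ℕ := fun i =>
  if (i : ℕ) = 0 then n - 1 + b else if (i : ℕ) ≤ j then n - (i : ℕ) else n - 1 - (i : ℕ)

lemma lemA {n : ℕ} (p j : ℕ) (hp : 0 < p) (hn : 2*p+2 ≤ n) (hj : j + 1 ≤ p) :
    ∀ (M : Multiset ℕ) (b : ℕ), M ≠ 0 → (∀ x ∈ M, p+1 ≤ x) → M.sum = b + j → 1 ≤ b →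
    MvPolynomial.coeff (sym (Ufn n j b)) (PQ n M) = (-1)^j := by
  intro M
  induction M using Multiset.induction_on with
  | empty => intro b h; exact absurd rfl h
  | cons m M ih =>
    intro b _ hparts hsum hb
    have hm : p + 1 ≤ m := hparts m (Multiset.mem_cons_self _ _)
    rw [Multiset.sum_cons] at hsum
    have hn0 : (0:ℕ) < n := by omega
    rw [key]
    rw [Finset.sum_eq_single (⟨0, hn0⟩ : Fin n)]
    · -- main term
      have hval : Ufn n j b ⟨0, hn0⟩ = n - 1 + b := by simp [Ufn]
      rw [hval, if_pos (by omega : m ≤ n - 1 + b)]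
      by_cases hM : M = (0 : Multiset ℕ)
      · -- last part : m = b + j
        subst hM
        have hmeq : m = b + j := by simpa using hsum
        have hupd : Function.update (Ufn n j b) ⟨0, hn0⟩ (n - 1 + b - m)
            = (fun i : Fin n => n - 1 - (i : ℕ)) ∘ (cycPerm n 0 j) := by
          funext x
          rw [Function.comp_apply]
          have hcyc := cycPerm_apply n 0 j (by omega) x
          rw [Function.update_apply]
          by_cases hx : x = (⟨0, hn0⟩ : Fin n)
          · rw [if_pos hx]
            have : (x : ℕ) = 0 := by rw [hx]
            rw [show ((cycPerm n 0 j x : Fin n) : ℕ) = cycFun 0 j (x : ℕ) from hcyc, this]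
            unfold cycFun
            split_ifs <;> omega
          · rw [if_neg hx]
            have hxv : (x : ℕ) ≠ 0 := fun h => hx (Fin.ext h)
            have hxn : (x : ℕ) < n := x.isLt
            rw [show ((cycPerm n 0 j x : Fin n) : ℕ) = cycFun 0 j (x : ℕ) from hcyc]
            unfold Ufn cycFun
            split_ifs <;> omega
        rw [hupd, coeff_perm, PQ_zero, coeff_delta_vdm, sign_cycPerm n j 0 (by omega)]
        push_cast
        ring
      · -- not last : recurse
        obtain ⟨x, hxM⟩ := Multiset.exists_mem_of_ne_zero hM
        obtain ⟨M', rfl⟩ := Multiset.exists_cons_of_mem hxM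
        have hx' : p + 1 ≤ x := hparts x (Multiset.mem_cons_of_mem (Multiset.mem_cons_self _ _))
        rw [Multiset.sum_cons] at hsum
        have hbm : m < b := by omega
        have hupd : Function.update (Ufn n j b) ⟨0, hn0⟩ (n - 1 + b - m) = Ufn n j (b - m) := by
          funext y
          rw [Function.update_apply]
          by_cases hy : y = (⟨0, hn0⟩ : Fin n)
          · rw [if_pos hy]
            have : (y : ℕ) = 0 := by rw [hy]
            unfold Ufn
            rw [if_pos this]
            omega
          · rw [if_neg hy]
            have hyv : (y : ℕ) ≠ 0 := fun h => hy (Fin.ext h)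
            unfold Ufn
            rw [if_neg hyv, if_neg hyv]
        rw [hupd]
        exact ih (b - m) (by simp) (fun y hy => hparts y (Multiset.mem_cons_of_mem hy))
          (by rw [Multiset.sum_cons]; omega) (by omega)
    · -- side terms vanish
      intro i _ hi
      have hiv : (i : ℕ) ≠ 0 := fun h => hi (Fin.ext h)
      have hin : (i : ℕ) < n := i.isLt
      split_ifs with hcond
      · by_cases hcol : (i : ℕ) ≤ j
        · -- column cell
          have hWi : Ufn n j b i = n - (i : ℕ) := by
            unfold Ufn; rw [if_neg hiv, if_pos hcol]
          rw [hWi] at hcond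
          have hy : (i : ℕ) + m - 1 < n := by omega
          apply coeff_dup _ _ (⟨(i : ℕ) + m - 1, hy⟩ : Fin n) i
          · intro hc
            have := congrArg (fun z : Fin n => (z : ℕ)) hc
            simp at this
            omega
          · rw [Function.update_apply, Function.update_apply, if_neg, if_pos rfl]
            · unfold Ufn
              simp only [Fin.val_mk]
              split_ifs <;> omega
            · intro hc
              have := congrArg (fun z : Fin n => (z : ℕ)) hc
              simp at this
              omega
        · -- low cell
          have hWi : Ufn n j b i = n - 1 - (i : ℕ) := by
            unfold Ufn; rw [if_neg hiv, if_neg hcol]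
          rw [hWi] at hcond
          have hy : (i : ℕ) + m < n := by omega
          apply coeff_dup _ _ (⟨(i : ℕ) + m, hy⟩ : Fin n) i
          · intro hc
            have := congrArg (fun z : Fin n => (z : ℕ)) hc
            simp at this
            omega
          · rw [Function.update_apply, Function.update_apply, if_neg, if_pos rfl]
            · unfold Ufn
              simp only [Fin.val_mk]
              split_ifs <;> omega
            · intro hc
              have := congrArg (fun z : Fin n => (z : ℕ)) hc
              simp at this
              omega
      · rfl
    · intro h; exact absurd (Finset.mem_univ _) h


open MvPolynomial

lemma neg_one_pow_congr (a b : ℕ) (h : a % 2 = b % 2) : (-1 : ℤ)^a = (-1 : ℤ)^b := by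
  rw [← Nat.div_add_mod a 2, ← Nat.div_add_mod b 2, pow_add, pow_add, pow_mul, pow_mul]
  norm_num [h]

/-- exponent vector `λ+δ` for the hook with `j-c` ones below the first row. -/
def Wfn (n j c : ℕ) : Fin n → ℕ := fun i =>
  if (i : ℕ) = 0 then 2*n - 1 - j else if (i : ℕ) ≤ j - c then n - (i : ℕ) else n - 1 - (i : ℕ)

lemma lemB {n : ℕ} (p j : ℕ) (hp : 0 < p) (hn : 2*p+2 ≤ n) (hj : j ≤ n - 1) (hjb : n ≤ j + p) :
    ∀ (M : Multiset ℕ) (c : ℕ), M ≠ 0 → (∀ x ∈ M, p+1 ≤ x) → M.sum + c = n → c ≤ j →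
    MvPolynomial.coeff (sym (Wfn n j c)) (PQ n M)
      = (-1)^(j - c + 1 + Multiset.card M) := by
  intro M
  induction M using Multiset.induction_on with
  | empty => intro c h; exact absurd rfl h
  | cons m M ih =>
    intro c _ hparts hsum hc
    have hm : p + 1 ≤ m := hparts m (Multiset.mem_cons_self _ _)
    rw [Multiset.sum_cons] at hsum
    have hn0 : (0:ℕ) < n := by omega
    rw [key]
    by_cases hM : M = (0 : Multiset ℕ)
    · -- final step: m = n - c, subtract from the big entry at position 0
      subst hM
      have hmeq : m = n - c := by simp at hsum; omega
      rw [Finset.sum_eq_single (⟨0, hn0⟩ : Fin n)]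
      · have hval : Wfn n j c ⟨0, hn0⟩ = 2*n - 1 - j := by simp [Wfn]
        rw [hval, if_pos (by omega : m ≤ 2*n - 1 - j)]
        have hupd : Function.update (Wfn n j c) ⟨0, hn0⟩ (2*n - 1 - j - m)
            = (fun i : Fin n => n - 1 - (i : ℕ)) ∘ (cycPerm n 0 (j - c)) := by
          funext x
          rw [Function.comp_apply]
          have hcyc := cycPerm_apply n 0 (j - c) (by omega) x
          rw [Function.update_apply]
          by_cases hx : x = (⟨0, hn0⟩ : Fin n)
          · rw [if_pos hx]
            have hx0 : (x : ℕ) = 0 := by rw [hx]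
            rw [show ((cycPerm n 0 (j - c) x : Fin n) : ℕ) = cycFun 0 (j - c) (x : ℕ) from hcyc,
              hx0]
            unfold cycFun
            split_ifs <;> omega
          · rw [if_neg hx]
            have hxv : (x : ℕ) ≠ 0 := fun h => hx (Fin.ext h)
            have hxn : (x : ℕ) < n := x.isLt
            rw [show ((cycPerm n 0 (j - c) x : Fin n) : ℕ) = cycFun 0 (j - c) (x : ℕ) from hcyc]
            unfold Wfn cycFun
            split_ifs <;> omega
        rw [hupd, coeff_perm, PQ_zero, coeff_delta_vdm, sign_cycPerm n (j - c) 0 (by omega)]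
        rw [mul_one]
        have : ((((-1 : ℤˣ) ^ (j - c) : ℤˣ)) : ℤ) = (-1 : ℤ)^(j - c) := by push_cast; ring
        rw [this]
        apply neg_one_pow_congr
        simp only [Multiset.card_cons, Multiset.card_zero]
        omega
      · -- other positions give repeated entries
        intro i _ hi
        have hiv : (i : ℕ) ≠ 0 := fun h => hi (Fin.ext h)
        have hin : (i : ℕ) < n := i.isLt
        split_ifs with hcond
        · by_cases hcol : (i : ℕ) ≤ j - c
          · -- column cell : value n - i, need i ≤ c
            have hWi : Wfn n j c i = n - (i : ℕ) := by
              unfold Wfn; rw [if_neg hiv, if_pos hcol]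
            rw [hWi] at hcond
            have hic : (i : ℕ) ≤ c := by omega
            have hclt : c < j := by omega
            have hy : n - 1 - c + (i : ℕ) < n := by omega
            apply coeff_dup _ _ (⟨n - 1 - c + (i : ℕ), hy⟩ : Fin n) i
            · intro hcq
              have := congrArg (fun z : Fin n => (z : ℕ)) hcq
              simp at this
              omega
            · rw [Function.update_apply, Function.update_apply, if_neg, if_pos rfl]
              · unfold Wfn
                simp only [Fin.val_mk]
                split_ifs <;> omega
              · intro hcq
                have := congrArg (fun z : Fin n => (z : ℕ)) hcq
                simp at this
                omega
          · -- low cell : value n - 1 - i, need i ≤ c - 1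
            have hWi : Wfn n j c i = n - 1 - (i : ℕ) := by
              unfold Wfn; rw [if_neg hiv, if_neg hcol]
            rw [hWi] at hcond
            have hy : n - c + (i : ℕ) < n := by omega
            apply coeff_dup _ _ (⟨n - c + (i : ℕ), hy⟩ : Fin n) i
            · intro hcq
              have := congrArg (fun z : Fin n => (z : ℕ)) hcq
              simp at this
              omega
            · rw [Function.update_apply, Function.update_apply, if_neg, if_pos rfl]
              · unfold Wfn
                simp only [Fin.val_mk]
                split_ifs <;> omega
              · intro hcq
                have := congrArg (fun z : Fin n => (z : ℕ)) hcq
                simp at this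
                omega
        · rfl
      · intro h; exact absurd (Finset.mem_univ _) h
    · -- inductive step: subtract from the column entry at position i₀ = j-c-m+1
      obtain ⟨x, hxM⟩ := Multiset.exists_mem_of_ne_zero hM
      obtain ⟨M', rfl⟩ := Multiset.exists_cons_of_mem hxM
      have hx' : p + 1 ≤ x := hparts x (Multiset.mem_cons_of_mem (Multiset.mem_cons_self _ _))
      rw [Multiset.sum_cons] at hsum
      have hmub : m + c + p + 1 ≤ n := by omega
      have hmj : m + c + 1 ≤ j := by omega
      have hi0 : j - c - m + 1 < n := by omega
      rw [Finset.sum_eq_single (⟨j - c - m + 1, hi0⟩ : Fin n)]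
      · have hval : Wfn n j c ⟨j - c - m + 1, hi0⟩ = n - (j - c - m + 1) := by
          unfold Wfn
          simp only [Fin.val_mk]
          rw [if_neg (by omega), if_pos (by omega)]
        rw [hval, if_pos (by omega : m ≤ n - (j - c - m + 1))]
        have hupd : Function.update (Wfn n j c) ⟨j - c - m + 1, hi0⟩ (n - (j - c - m + 1) - m)
            = (Wfn n j (c + m)) ∘ (cycPerm n (j - c - m + 1) (m - 1)) := by
          funext y
          rw [Function.comp_apply]
          have hcyc := cycPerm_apply n (j - c - m + 1) (m - 1) (by omega) y
          rw [Function.update_apply]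
          have hyn : (y : ℕ) < n := y.isLt
          by_cases hy : y = (⟨j - c - m + 1, hi0⟩ : Fin n)
          · rw [if_pos hy]
            have hy0 : (y : ℕ) = j - c - m + 1 := by rw [hy]
            unfold Wfn
            rw [hcyc, hy0]
            unfold cycFun
            split_ifs <;> omega
          · rw [if_neg hy]
            have hyv : (y : ℕ) ≠ j - c - m + 1 := fun h => hy (Fin.ext h)
            unfold Wfn
            rw [hcyc]
            unfold cycFun
            split_ifs <;> omega
        rw [hupd, coeff_perm,
          ih (c + m) (by simp) (fun y hy => hparts y (Multiset.mem_cons_of_mem hy))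
            (by rw [Multiset.sum_cons]; omega) (by omega),
          sign_cycPerm n (m - 1) (j - c - m + 1) (by omega)]
        have : ((((-1 : ℤˣ) ^ (m - 1) : ℤˣ)) : ℤ) = (-1 : ℤ)^(m - 1) := by push_cast; ring
        rw [this, ← pow_add]
        apply neg_one_pow_congr
        simp only [Multiset.card_cons]
        omega
      · -- all other positions vanish
        intro i _ hi
        have hiv : (i : ℕ) ≠ j - c - m + 1 := fun h => hi (Fin.ext h)
        have hin : (i : ℕ) < n := i.isLt
        split_ifs with hcond
        · by_cases hzero : (i : ℕ) = 0
          · -- big entry: collides with a column entry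
            have hWi : Wfn n j c i = 2*n - 1 - j := by unfold Wfn; rw [if_pos hzero]
            rw [hWi] at hcond
            have hy : j + m + 1 - n < n := by omega
            apply coeff_dup _ _ (⟨j + m + 1 - n, hy⟩ : Fin n) i
            · intro hcq
              have := congrArg (fun z : Fin n => (z : ℕ)) hcq
              simp at this
              omega
            · rw [Function.update_apply, Function.update_apply, if_neg, if_pos rfl]
              · unfold Wfn
                simp only [Fin.val_mk]
                split_ifs <;> omega
              · intro hcq
                have := congrArg (fun z : Fin n => (z : ℕ)) hcq
                simp at this
                omega
          · by_cases hcol : (i : ℕ) ≤ j - c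
            · -- column cell, i ≠ i₀
              have hWi : Wfn n j c i = n - (i : ℕ) := by
                unfold Wfn; rw [if_neg hzero, if_pos hcol]
              rw [hWi] at hcond
              by_cases hsmall : (i : ℕ) + m ≤ j - c
              · -- lands among column values
                have hy : (i : ℕ) + m < n := by omega
                apply coeff_dup _ _ (⟨(i : ℕ) + m, hy⟩ : Fin n) i
                · intro hcq
                  have := congrArg (fun z : Fin n => (z : ℕ)) hcq
                  simp at this
                  omega
                · rw [Function.update_apply, Function.update_apply, if_neg, if_pos rfl]
                  · unfold Wfn
                    simp only [Fin.val_mk]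
                    split_ifs <;> omega
                  · intro hcq
                    have := congrArg (fun z : Fin n => (z : ℕ)) hcq
                    simp at this
                    omega
              · -- lands among low values (i + m ≥ j - c + 2 since i ≠ i₀)
                have hbig : j - c + 2 ≤ (i : ℕ) + m := by omega
                have hy : (i : ℕ) + m - 1 < n := by omega
                apply coeff_dup _ _ (⟨(i : ℕ) + m - 1, hy⟩ : Fin n) i
                · intro hcq
                  have := congrArg (fun z : Fin n => (z : ℕ)) hcq
                  simp at this
                  omega
                · rw [Function.update_apply, Function.update_apply, if_neg, if_pos rfl]
                  · unfold Wfn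
                    simp only [Fin.val_mk]
                    split_ifs <;> omega
                  · intro hcq
                    have := congrArg (fun z : Fin n => (z : ℕ)) hcq
                    simp at this
                    omega
            · -- low cell
              have hWi : Wfn n j c i = n - 1 - (i : ℕ) := by
                unfold Wfn; rw [if_neg hzero, if_neg hcol]
              rw [hWi] at hcond
              have hy : (i : ℕ) + m < n := by omega
              apply coeff_dup _ _ (⟨(i : ℕ) + m, hy⟩ : Fin n) i
              · intro hcq
                have := congrArg (fun z : Fin n => (z : ℕ)) hcq
                simp at this
                omega
              · rw [Function.update_apply, Function.update_apply, if_neg, if_pos rfl]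
                · unfold Wfn
                  simp only [Fin.val_mk]
                  split_ifs <;> omega
                · intro hcq
                  have := congrArg (fun z : Fin n => (z : ℕ)) hcq
                  simp at this
                  omega
        · rfl
      · intro h; exact absurd (Finset.mem_univ _) h


open MvPolynomial
lemma sort_hook {n j : ℕ} (lam : Nat.Partition n) (hjn : j + 1 ≤ n)
    (hlam : lam.parts = Multiset.replicate j 1 + {n - j}) :
    lam.parts.sort (· ≤ ·) = List.replicate j 1 ++ [n - j] := by
  refine (fun hp h1 h2 => List.Perm.eq_of_pairwise' (r := (· ≤ ·)) h1 h2 hp) ?_ ?_ ?_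
  · rw [← Multiset.coe_eq_coe, Multiset.sort_eq, hlam, ← Multiset.coe_add,
      Multiset.coe_replicate, Multiset.coe_singleton]
  · exact Multiset.pairwise_sort _ _
  · rw [List.pairwise_append]
    refine ⟨?_, List.pairwise_singleton _ _, ?_⟩
    · rw [List.pairwise_replicate]
      right; exact le_refl 1
    · intro x hx y hy
      rw [List.eq_of_mem_replicate hx, List.mem_singleton.mp hy]
      omega

lemma partFn_hook {n j : ℕ} (lam : Nat.Partition n) (hjn : j + 1 ≤ n)
    (hlam : lam.parts = Multiset.replicate j 1 + {n - j}) (i : ℕ) :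
    partFn lam i = if i = 0 then n - j else if i ≤ j then 1 else 0 := by
  have hs : sortedParts lam = (n - j) :: List.replicate j 1 := by
    unfold sortedParts
    rw [sort_hook lam hjn hlam, List.reverse_append, List.reverse_replicate]
    rfl
  unfold partFn
  rw [hs]
  rcases Nat.eq_zero_or_pos i with hi | hi
  · subst hi; simp
  · rw [if_neg (by omega)]
    by_cases hij : i ≤ j
    · rw [if_pos hij]
      have hlen : i < ((n - j) :: List.replicate j 1).length := by
        simp [List.length_replicate]; omega
      rw [List.getD_eq_getElem _ _ hlen]
      obtain ⟨k, rfl⟩ : ∃ k, i = k + 1 := ⟨i - 1, by omega⟩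
      simp
    · rw [if_neg hij]
      apply List.getD_eq_default
      simp [List.length_replicate]; omega

theorem stmt5' (n p j : ℕ) (hp : 0 < p) (hn : 2 * p + 2 ≤ n) (hj : j ≤ n - 1)
    (lam mu : Nat.Partition n)
    (hmu : ∀ m ∈ mu.parts, p + 1 ≤ m)
    (hlam : lam.parts = Multiset.replicate j 1 + {n - j}) :
    (j ≤ p - 1 → chi lam mu = (-1 : ℤ) ^ j) ∧
    (n - p ≤ j → (chi lam mu : ℚ) = (-1 : ℚ) ^ ((j : ℤ) + 1 - (mu.parts.card : ℤ))) := by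
  have hjn : j + 1 ≤ n := by omega
  have hMne : mu.parts ≠ 0 := by
    intro h
    have := mu.parts_sum
    rw [h] at this
    simp at this
    omega
  have hMsum : mu.parts.sum = n := mu.parts_sum
  have hpf := partFn_hook lam hjn hlam
  constructor
  · intro hcase
    have hE : (fun i : Fin n => partFn lam (i : ℕ) + (n - 1 - (i : ℕ))) = Ufn n j (n - j) := by
      funext x
      rw [hpf]
      unfold Ufn
      have := x.isLt
      split_ifs <;> omega
    have h1 : chi lam mu
        = MvPolynomial.coeff (sym (Ufn n j (n - j))) (PQ n mu.parts) := by
      unfold chi PQ sym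
      rw [← hE]
    rw [h1]
    exact lemA p j hp hn (by omega) mu.parts (n - j) hMne hmu (by omega) (by omega)
  · intro hcase
    have hE : (fun i : Fin n => partFn lam (i : ℕ) + (n - 1 - (i : ℕ))) = Wfn n j 0 := by
      funext x
      rw [hpf]
      unfold Wfn
      have := x.isLt
      split_ifs <;> omega
    have h1 : chi lam mu
        = MvPolynomial.coeff (sym (Wfn n j 0)) (PQ n mu.parts) := by
      unfold chi PQ sym
      rw [← hE]
    rw [h1, lemB p j hp hn hj (by omega) mu.parts 0 hMne hmu (by omega) (by omega)]
    set L : ℕ := Multiset.card mu.parts with hL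
    have hcast : (((-1 : ℤ)^(j - 0 + 1 + L) : ℤ) : ℚ) = (-1 : ℚ)^(j + 1 + L) := by
      push_cast
      norm_num
    rw [hcast]
    have hz1 : ((j : ℤ) + 1 - (L : ℤ)) + 2 * (L : ℤ) = ((j + 1 + L : ℕ) : ℤ) := by push_cast; ring
    have hz2 : (-1 : ℚ)^(((j + 1 + L : ℕ) : ℤ)) = (-1 : ℚ)^(j + 1 + L) := zpow_natCast _ _
    rw [← hz2, ← hz1, zpow_add₀ (by norm_num : (-1 : ℚ) ≠ 0)]
    have hz3 : (-1 : ℚ)^(2 * (L : ℤ)) = 1 := by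
      rw [zpow_mul]
      norm_num
    rw [hz3, mul_one]


end Stmt5Aux

/-- hook character values on a class `μ` with all parts at least `p+1`. -/
theorem stmt5 (n p j : ℕ) (hp : 0 < p) (hn : 2 * p + 2 ≤ n) (hj : j ≤ n - 1)
    (lam mu : Nat.Partition n)
    (hmu : ∀ m ∈ mu.parts, p + 1 ≤ m)
    (hlam : lam.parts = Multiset.replicate j 1 + {n - j}) :
    (j ≤ p - 1 → chi lam mu = (-1 : ℤ) ^ j) ∧
    (n - p ≤ j → (chi lam mu : ℚ) = (-1 : ℚ) ^ ((j : ℤ) + 1 - (mu.parts.card : ℤ))) :=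
  Stmt5Aux.stmt5' n p j hp hn hj lam mu hmu hlam
end
end

section
/- Let λ = [1^j, n−j] be a hook partition of n and r ≥ 0 an integer. Then 𝔠_{λ,r} / f^λ = ∑_{d=0}^r (−1)^d C(r,d) C(r−d+n−j−1, n), where f^λ is the dimension of the irreducible representation of S_n indexed by λ, 𝔪_{λ,m} = ∏_{u∈λ} (m + c(u))/h(u), and 𝔠_{λ,m} = ∑_{d=0}^m (−1)^d C(m,d) 𝔪_{λ,m−d}. -/
open Equiv Finset

noncomputable section
open scoped Classical

section Hook
variable {n j : ℕ} (hj : j + 1 ≤ n) (lam : Nat.Partition n)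
  (hlam : lam.parts = Multiset.replicate j 1 + {n - j})

include hj hlam

lemma sortedParts_hook : sortedParts lam = (n - j) :: List.replicate j 1 := by
  have hsort : lam.parts.sort (· ≤ ·) = List.replicate j 1 ++ [n - j] := by
    have hperm : (lam.parts.sort (· ≤ ·)).Perm (List.replicate j 1 ++ [n - j]) := by
      apply Multiset.coe_eq_coe.mp
      rw [Multiset.sort_eq, hlam]
      rw [← Multiset.coe_add, ← Multiset.coe_replicate, ← Multiset.coe_singleton]
    have hs2 : List.Pairwise (· ≤ ·) (List.replicate j 1 ++ [n - j]) := by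
      simp only [List.pairwise_append, List.pairwise_replicate]
      refine ⟨by simp, by simp, ?_⟩
      intro x hx y hy
      have := List.eq_of_mem_replicate hx
      simp at hy
      omega
    exact hperm.eq_of_pairwise' (Multiset.pairwise_sort _ _) hs2
  simp [sortedParts, hsort]

lemma partFn_hook (i : ℕ) :
    partFn lam i = if i = 0 then n - j else if i ≤ j then 1 else 0 := by
  rw [partFn, sortedParts_hook hj lam hlam]
  match i with
  | 0 => simp
  | Nat.succ k =>
    simp only [List.getD_cons_succ, Nat.succ_ne_zero, ite_false]
    rcases lt_or_ge k j with h | h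
    · rw [List.getD_eq_getElem _ _ (by simpa using h)]
      simp only [List.getElem_replicate]
      split_ifs <;> omega
    · rw [List.getD_eq_default _ _ (by simpa using h)]
      split_ifs <;> omega

lemma conjFn_hook (c : ℕ) :
    conjFn lam c = if c = 0 then j + 1 else if c < n - j then 1 else 0 := by
  rw [conjFn]
  split_ifs with h1 h2
  · have h : (Finset.range n).filter (fun i => c < partFn lam i) = Finset.range (j + 1) := by
      ext i
      simp only [Finset.mem_filter, Finset.mem_range, partFn_hook hj lam hlam]
      split_ifs <;> omega
    rw [h, Finset.card_range]
  · have h : (Finset.range n).filter (fun i => c < partFn lam i) = {0} := by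
      ext i
      simp only [Finset.mem_filter, Finset.mem_range, partFn_hook hj lam hlam,
        Finset.mem_singleton]
      split_ifs <;> omega
    rw [h, Finset.card_singleton]
  · have h : (Finset.range n).filter (fun i => c < partFn lam i) = ∅ := by
      ext i
      simp only [Finset.mem_filter, Finset.mem_range, partFn_hook hj lam hlam,
        Finset.notMem_empty, iff_false, not_and]
      intro hi
      split_ifs <;> omega
    rw [h, Finset.card_empty]

lemma cells_hook :
    cells lam = ((Finset.range (n - j)).image fun c => ((0 : ℕ), c)) ∪
      ((Finset.Icc 1 j).image fun i => (i, (0 : ℕ))) := by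
  ext ⟨a, b⟩
  simp only [cells, Finset.mem_filter, Finset.mem_product, Finset.mem_range,
    Finset.mem_union, Finset.mem_image, Finset.mem_Icc, partFn_hook hj lam hlam,
    Prod.mk.injEq]
  constructor
  · rintro ⟨⟨ha, hb⟩, hp⟩
    split_ifs at hp with h1 h2
    · left; exact ⟨b, by omega, by omega, by omega⟩
    · right; exact ⟨a, by omega, by omega, by omega⟩
    · omega
  · rintro (⟨x, hx, h0, hxb⟩ | ⟨x, hx, hxa, h0⟩)
    · subst hxb; subst h0
      refine ⟨⟨by omega, by omega⟩, ?_⟩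
      split_ifs <;> omega
    · subst hxa; subst h0
      refine ⟨⟨by omega, by omega⟩, ?_⟩
      split_ifs <;> omega

lemma prod_cells_hook (f : ℕ × ℕ → ℚ) :
    ∏ c ∈ cells lam, f c =
      (∏ c ∈ Finset.range (n - j), f (0, c)) * ∏ i ∈ Finset.Icc 1 j, f (i, 0) := by
  rw [cells_hook hj lam hlam, Finset.prod_union, Finset.prod_image, Finset.prod_image]
  · intro x _ y _ h; simpa using h
  · intro x _ y _ h; simpa using h
  · simp only [Finset.disjoint_left, Finset.mem_image, Finset.mem_range, Finset.mem_Icc]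
    rintro ⟨a, b⟩ ⟨x, hx, hxe⟩ ⟨y, hy, hye⟩
    simp only [Prod.mk.injEq] at hxe hye
    omega

lemma hook_row (c : ℕ) (hc : c < n - j) :
    hookLen lam (0, c) = if c = 0 then n else n - j - c := by
  simp only [hookLen, partFn_hook hj lam hlam, conjFn_hook hj lam hlam]
  split_ifs <;> omega

lemma hook_col (i : ℕ) (h1 : 1 ≤ i) (h2 : i ≤ j) :
    hookLen lam (i, 0) = j + 1 - i := by
  simp only [hookLen, partFn_hook hj lam hlam, conjFn_hook hj lam hlam]
  split_ifs <;> omega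

end Hook

lemma keyN (m n j : ℕ) (hj : j + 1 ≤ n) (hm : j + 1 ≤ m) :
    (∏ c ∈ Finset.range (n - j), (m + c)) * (∏ i ∈ Finset.Icc 1 j, (m - i)) =
      (m + n - j - 1).descFactorial n := by
  rw [Nat.descFactorial_eq_prod_range]
  have hn : n = (n - j) + j := by omega
  rw [show (∏ i ∈ Finset.range n, (m + n - j - 1 - i)) =
      ∏ i ∈ Finset.range ((n - j) + j), (m + n - j - 1 - i) by rw [← hn]]
  rw [Finset.prod_range_add]
  congr 1
  · rw [← Finset.prod_range_reflect (fun c => m + c) (n - j)]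
    apply Finset.prod_congr rfl
    intro t ht
    simp only [Finset.mem_range] at ht
    omega
  · rw [show Finset.Icc 1 j = Finset.Ico 1 (j + 1) by rfl, Finset.prod_Ico_eq_prod_range]
    apply Finset.prod_congr (by norm_num)
    intro t ht
    simp only [Finset.mem_range] at ht
    omega

lemma keyQ (m n j : ℕ) (hj : j + 1 ≤ n) :
    (∏ c ∈ Finset.range (n - j), ((m : ℚ) + c)) * (∏ i ∈ Finset.Icc 1 j, ((m : ℚ) - i)) =
      (n.factorial : ℚ) * ((m + n - j - 1).choose n : ℚ) := by
  rcases le_or_gt (j + 1) m with hm | hm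
  · have h1 : (∏ c ∈ Finset.range (n - j), ((m : ℚ) + c)) =
        ((∏ c ∈ Finset.range (n - j), (m + c) : ℕ) : ℚ) := by push_cast; ring_nf
    have h2 : (∏ i ∈ Finset.Icc 1 j, ((m : ℚ) - i)) =
        ((∏ i ∈ Finset.Icc 1 j, (m - i) : ℕ) : ℚ) := by
      rw [Nat.cast_prod]
      apply Finset.prod_congr rfl
      intro i hi
      simp only [Finset.mem_Icc] at hi
      rw [Nat.cast_sub (by omega)]
    rw [h1, h2, ← Nat.cast_mul, keyN m n j hj hm,
      Nat.descFactorial_eq_factorial_mul_choose]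
    push_cast; ring
  · have hz : ((m + n - j - 1).choose n : ℚ) = 0 := by
      rw [Nat.choose_eq_zero_of_lt (by omega)]
      simp
    rw [hz, mul_zero]
    rcases Nat.eq_zero_or_pos m with h0 | h0
    · have : (∏ c ∈ Finset.range (n - j), ((m : ℚ) + c)) = 0 := by
        apply Finset.prod_eq_zero (Finset.mem_range.mpr (show 0 < n - j by omega))
        simp [h0]
      rw [this, zero_mul]
    · have : (∏ i ∈ Finset.Icc 1 j, ((m : ℚ) - i)) = 0 := by
        apply Finset.prod_eq_zero (Finset.mem_Icc.mpr ⟨h0, by omega⟩)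
        simp
      rw [this, mul_zero]

lemma mfrak_div_fdim (n j : ℕ) (hj : j + 1 ≤ n) (lam : Nat.Partition n)
    (hlam : lam.parts = Multiset.replicate j 1 + {n - j}) (m : ℕ) :
    mfrak lam m / fdim lam = ((m + n - j - 1).choose n : ℚ) := by
  have hfac : (n.factorial : ℚ) ≠ 0 := by positivity
  have hH : (∏ c ∈ cells lam, (hookLen lam c : ℚ)) ≠ 0 := by
    rw [prod_cells_hook hj lam hlam]
    apply mul_ne_zero
    · apply Finset.prod_ne_zero_iff.mpr
      intro c hc
      simp only [Finset.mem_range] at hc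
      rw [hook_row hj lam hlam c hc]
      split_ifs <;> exact Nat.cast_ne_zero.mpr (by omega)
    · apply Finset.prod_ne_zero_iff.mpr
      intro i hi
      simp only [Finset.mem_Icc] at hi
      rw [hook_col hj lam hlam i hi.1 hi.2]
      exact Nat.cast_ne_zero.mpr (by omega)
  rw [mfrak, fdim, Finset.prod_div_distrib, div_div_div_comm, div_self hH, div_one]
  rw [prod_cells_hook hj lam hlam (fun c => (m : ℚ) + content c)]
  have hc1 : (∏ c ∈ Finset.range (n - j), ((m : ℚ) + content (0, c))) =
      ∏ c ∈ Finset.range (n - j), ((m : ℚ) + c) := by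
    apply Finset.prod_congr rfl; intro c _; simp [content]
  have hc2 : (∏ i ∈ Finset.Icc 1 j, ((m : ℚ) + content (i, 0))) =
      ∏ i ∈ Finset.Icc 1 j, ((m : ℚ) - i) := by
    apply Finset.prod_congr rfl; intro i _; simp [content]; ring
  rw [hc1, hc2, keyQ m n j hj, mul_comm, mul_div_assoc, div_self hfac, mul_one]

/-- `𝔠_{λ,r}/f^λ` for a hook `λ = [1^j, n-j]`. -/
theorem stmt6 (n j r : ℕ) (hj : j + 1 ≤ n) (lam : Nat.Partition n)
    (hlam : lam.parts = Multiset.replicate j 1 + {n - j}) :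
    cfrak lam r / fdim lam =
      ∑ d ∈ Finset.range (r + 1),
        (-1 : ℚ) ^ d * (r.choose d : ℚ) * ((r - d + n - j - 1).choose n : ℚ) := by
  rw [cfrak, Finset.sum_div]
  apply Finset.sum_congr rfl
  intro d hd
  rw [mul_div_assoc, mfrak_div_fdim n j hj lam hlam (r - d)]
end
end

section
/- Let λ = [1^j, 2^k, p−k+1, n−j−k−p−1] be a partition of n with 0 ≤ k ≤ p−1 and 0 ≤ j ≤ n−2p−2, and let r ≥ 0. Then 𝔠_{λ,r}/f^λ = (p!(n−p)!/n!) ∑_{d=0}^r (−1)^d C(r,d) C(r−d+p−k−1, p) C(r−d+n−j−k−p−2, n−p). -/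
open Equiv Finset

noncomputable section
open scoped Classical

def DD (x : ℚ) (t : ℕ) : ℚ := ∏ s ∈ Finset.range t, (x - (s:ℚ))

lemma DD_zero (x : ℚ) : DD x 0 = 1 := by simp [DD]

lemma DD_one (x : ℚ) : DD x 1 = x := by simp [DD]

lemma DD_add (x : ℚ) (t u : ℕ) : DD x (t + u) = DD x t * DD (x - t) u := by
  unfold DD
  rw [Finset.prod_range_add]
  congr 1
  refine Finset.prod_congr rfl fun s _ => ?_
  push_cast; ring

lemma DD_succ' (y : ℚ) (t : ℕ) : DD y (t + 1) = y * DD (y - 1) t := by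
  unfold DD
  rw [Finset.prod_range_succ']
  push_cast
  rw [sub_zero, mul_comm]
  congr 1
  refine Finset.prod_congr rfl fun s _ => ?_
  ring

lemma DD_cast (M K : ℕ) : DD (M : ℚ) K = (K.factorial : ℚ) * (M.choose K : ℚ) := by
  rcases le_or_gt K M with h | h
  · have h1 : ((M.descFactorial K : ℕ) : ℚ) = DD (M : ℚ) K := by
      rw [Nat.descFactorial_eq_prod_range, Nat.cast_prod]
      refine Finset.prod_congr rfl fun i hi => ?_
      rw [Finset.mem_range] at hi
      rw [Nat.cast_sub (by omega)]
    rw [← h1, Nat.descFactorial_eq_factorial_mul_choose]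
    push_cast; ring
  · rw [Nat.choose_eq_zero_of_lt h]
    have : DD (M : ℚ) K = 0 :=
      Finset.prod_eq_zero (Finset.mem_range.mpr h) (by simp)
    simp [this]

lemma UU (t : ℕ) (x : ℚ) : ∏ c ∈ Finset.range t, (x + (c:ℚ)) = DD (x + t - 1) t := by
  induction t with
  | zero => simp [DD]
  | succ t ih =>
    rw [Finset.prod_range_succ, ih]
    have : x + (t+1 : ℕ) - 1 = (x + t - 1 + 1) := by push_cast; ring
    rw [this, DD_succ']
    ring_nf

lemma getD_rep (c x : ℕ) (l : List ℕ) : ∀ i : ℕ,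
    (List.replicate c x ++ l).getD i 0 = if i < c then x else l.getD (i - c) 0 := by
  induction c with
  | zero => intro i; simp
  | succ c ih =>
    intro i
    cases i with
    | zero => simp [List.replicate_succ]
    | succ i =>
      rw [List.replicate_succ, List.cons_append, List.getD_cons_succ, ih i]
      by_cases h : i < c <;> simp [h, Nat.succ_lt_succ_iff, Nat.succ_sub_succ]

set_option maxHeartbeats 2000000 in
/-- `𝔠_{λ,r}/f^λ` for `λ = [1^j, 2^k, p-k+1, n-j-k-p-1]`. -/
theorem stmt7 (n p j k r : ℕ) (hp : 0 < p) (hn : 2 * p + 2 ≤ n)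
    (hk : k ≤ p - 1) (hj : j ≤ n - 2 * p - 2)
    (lam : Nat.Partition n)
    (hlam : lam.parts =
      Multiset.replicate j 1 + Multiset.replicate k 2 + {p - k + 1, n - j - k - p - 1}) :
    cfrak lam r / fdim lam =
      ((p.factorial : ℚ) * ((n - p).factorial : ℚ) / (n.factorial : ℚ)) *
        ∑ d ∈ Finset.range (r + 1),
          (-1 : ℚ) ^ d * (r.choose d : ℚ) * ((r - d + p - k - 1).choose p : ℚ) *
            ((r - d + n - j - k - p - 2).choose (n - p) : ℚ) := by
  have hk' : k + 1 ≤ p := by omega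
  have hn' : j + 2 * p + 2 ≤ n := by omega
  set a := n - j - k - p - 1 with ha_def
  set b := p - k + 1 with hb_def
  have hab : b ≤ a := by omega
  have hb2 : 2 ≤ b := by omega
  have han : a ≤ n := by omega
  have hkn : k + j + 2 ≤ n := by omega
  -- Step 1: sorted parts
  have hsort : sortedParts lam = a :: b :: (List.replicate k 2 ++ List.replicate j 1) := by
    unfold sortedParts
    have h1 : lam.parts.sort (· ≤ ·)
        = List.replicate j 1 ++ List.replicate k 2 ++ [b, a] := by
      refine (fun hp h1 h2 => List.Perm.eq_of_pairwise' (r := (· ≤ ·)) h1 h2 hp) ?_ ?_ ?_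
      · rw [← Multiset.coe_eq_coe, Multiset.sort_eq, hlam]
        simp only [← Multiset.coe_add, ← Multiset.coe_replicate]
        rfl
      · exact Multiset.pairwise_sort _ _
      · simp [List.pairwise_append, List.mem_replicate]
        exact ⟨⟨hab, fun _ => ⟨hb2, by omega⟩⟩,
          fun _ b1 h => by rcases h with ⟨_, rfl⟩ | rfl | rfl <;> omega⟩
    rw [h1]
    simp [List.reverse_append]
  -- Step 2: part function values
  have hpart : ∀ i : ℕ, partFn lam i =
      if i = 0 then a else if i = 1 then b else if i < k + 2 then 2
      else if i < k + j + 2 then 1 else 0 := by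
    intro i
    unfold partFn
    rw [hsort]
    match i with
    | 0 => simp
    | 1 => simp
    | (i+2) =>
      simp only [List.getD_cons_succ]
      have h2 : (List.replicate k 2 ++ List.replicate j 1).getD i 0
          = if i < k then 2 else if i - k < j then 1 else 0 := by
        rw [getD_rep]
        by_cases hik : i < k
        · simp [hik]
        · simp only [hik, if_false]
          have h3 := getD_rep j 1 [] (i - k)
          simpa using h3
      rw [h2]
      split_ifs <;> first | omega | exact False.elim (by assumption)
  -- Step 3: hook lengths are positive
  have hhook : ∀ u ∈ cells lam, 1 ≤ hookLen lam u := by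
    intro u hu
    obtain ⟨i, c⟩ := u
    simp only [cells, Finset.mem_filter, Finset.mem_product, Finset.mem_range] at hu
    obtain ⟨⟨hin, hcn⟩, hcp⟩ := hu
    have hconj : i + 1 ≤ conjFn lam c := by
      have hsub : Finset.range (i+1) ⊆ (Finset.range n).filter fun i' => c < partFn lam i' := by
        intro i' hi'
        rw [Finset.mem_range] at hi'
        rw [Finset.mem_filter, Finset.mem_range]
        refine ⟨by omega, lt_of_lt_of_le hcp ?_⟩
        rw [hpart i, hpart i']
        split_ifs <;> omega
      calc i + 1 = (Finset.range (i+1)).card := by simp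
        _ ≤ _ := Finset.card_le_card hsub
    simp only [hookLen]
    omega
  have hHne : (∏ u ∈ cells lam, (hookLen lam u : ℚ)) ≠ 0 := by
    rw [Finset.prod_ne_zero_iff]
    intro u hu
    exact Nat.cast_ne_zero.mpr (by have := hhook u hu; omega)
  have hple : ∀ i, partFn lam i ≤ n := by
    intro i; rw [hpart i]; split_ifs <;> omega
  -- Step 4: the cell product
  have hcells : ∀ m : ℕ, ∏ u ∈ cells lam, ((m : ℚ) + content u)
      = DD ((m:ℚ) + p - k - 1) p * DD ((m:ℚ) + n - j - k - p - 2) (n - p) := by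
    intro m
    have hprod : ∏ u ∈ cells lam, ((m : ℚ) + content u)
        = ∏ i ∈ Finset.range n, ∏ c ∈ Finset.range (partFn lam i), ((m:ℚ) + c - i) := by
      unfold cells
      rw [Finset.prod_filter, Finset.prod_product]
      refine Finset.prod_congr rfl fun i _ => ?_
      rw [← Finset.prod_filter]
      have hflt : Finset.filter (fun c => c < partFn lam i) (Finset.range n)
          = Finset.range (partFn lam i) := by
        ext c
        simp only [Finset.mem_filter, Finset.mem_range]
        have := hple i
        constructor
        · intro hc; exact hc.2
        · intro hc; exact ⟨by omega, hc⟩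
      rw [hflt]
      refine Finset.prod_congr rfl fun c _ => ?_
      simp only [content]
      ring
    rw [hprod]
    set G : ℕ → ℚ := fun i => ∏ c ∈ Finset.range (partFn lam i), ((m:ℚ) + c - i) with hG
    have hsplit : ∏ i ∈ Finset.range n, G i
        = (G 0 * G 1) * (∏ i ∈ Finset.Ico 2 (k+2), G i)
          * (∏ i ∈ Finset.Ico (k+2) (k+j+2), G i)
          * (∏ i ∈ Finset.Ico (k+j+2) n, G i) := by
      have c1 := Finset.prod_Ico_consecutive G (show 0 ≤ k+j+2 by omega) (show k+j+2 ≤ n by omega)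
      have c2 := Finset.prod_Ico_consecutive G (show 0 ≤ k+2 by omega) (show k+2 ≤ k+j+2 by omega)
      have c3 := Finset.prod_Ico_consecutive G (show 0 ≤ 2 by omega) (show 2 ≤ k+2 by omega)
      have c4 : ∏ i ∈ Finset.Ico 0 2, G i = G 0 * G 1 := by
        rw [show Finset.Ico 0 2 = Finset.range 2 by rw [Finset.range_eq_Ico]]
        rw [Finset.prod_range_succ, Finset.prod_range_one]
      rw [Finset.range_eq_Ico, ← c1, ← c2, ← c3, c4]
      try ring
    have e0 : G 0 = DD ((m:ℚ) + a - 1) a := by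
      simp only [hG]
      have h0 : partFn lam 0 = a := by rw [hpart 0]; simp
      rw [h0]
      simp only [Nat.cast_zero, sub_zero]
      exact UU a (m:ℚ)
    have e1 : G 1 = DD ((m:ℚ) + b - 2) b := by
      simp only [hG]
      have h1 : partFn lam 1 = b := by rw [hpart 1]; simp
      rw [h1]
      calc ∏ c ∈ Finset.range b, ((m:ℚ) + c - (1:ℕ))
          = ∏ c ∈ Finset.range b, (((m:ℚ) - 1) + c) := by
            refine Finset.prod_congr rfl fun c _ => ?_; push_cast; ring
        _ = DD ((m:ℚ) - 1 + b - 1) b := UU b _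
        _ = DD ((m:ℚ) + b - 2) b := by congr 1; ring
    have e2 : ∏ i ∈ Finset.Ico 2 (k+2), G i = DD ((m:ℚ) - 2) k * DD ((m:ℚ) - 1) k := by
      rw [Finset.prod_Ico_eq_prod_range]
      simp only [show k + 2 - 2 = k from by omega, DD]
      rw [← Finset.prod_mul_distrib]
      refine Finset.prod_congr rfl fun s hs => ?_
      rw [Finset.mem_range] at hs
      simp only [hG]
      have h2 : partFn lam (2 + s) = 2 := by
        rw [hpart]; split_ifs <;> omega
      rw [h2, Finset.prod_range_succ, Finset.prod_range_one]
      push_cast; ring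
    have e3 : ∏ i ∈ Finset.Ico (k+2) (k+j+2), G i = DD ((m:ℚ) - k - 2) j := by
      rw [Finset.prod_Ico_eq_prod_range]
      simp only [show k + j + 2 - (k+2) = j from by omega, DD]
      refine Finset.prod_congr rfl fun s hs => ?_
      rw [Finset.mem_range] at hs
      simp only [hG]
      have h3 : partFn lam (k+2+s) = 1 := by
        rw [hpart]; split_ifs <;> omega
      rw [h3, Finset.prod_range_one]
      push_cast; ring
    have e4 : ∏ i ∈ Finset.Ico (k+j+2) n, G i = 1 := by
      apply Finset.prod_eq_one
      intro i hi
      rw [Finset.mem_Ico] at hi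
      simp only [hG]
      have h4 : partFn lam i = 0 := by
        rw [hpart]; split_ifs <;> omega
      rw [h4]
      simp
    rw [hsplit, e0, e1, e2, e3, e4]
    -- cast facts
    have haq : (a:ℚ) = (n:ℚ) - j - k - p - 1 := by
      have h5 : a + (j+k+p+1) = n := by omega
      have h6 := congrArg (Nat.cast : ℕ → ℚ) h5
      push_cast at h6
      linarith
    have hpkq : ((p - k : ℕ) : ℚ) = (p:ℚ) - k := by
      have h5 : (p - k) + k = p := by omega
      have h6 := congrArg (Nat.cast : ℕ → ℚ) h5
      push_cast at h6
      linarith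
    have hbq : (b:ℚ) = (p:ℚ) - k + 1 := by
      rw [hb_def]
      push_cast
      linarith [hpkq]
    -- RHS decompositions
    have r1 : DD ((m:ℚ) + p - k - 1) p
        = DD ((m:ℚ) + p - k - 1) (p - k) * DD ((m:ℚ) - 1) k := by
      calc DD ((m:ℚ) + p - k - 1) p = DD ((m:ℚ) + p - k - 1) ((p - k) + k) := by
            congr 1; omega
        _ = DD ((m:ℚ) + p - k - 1) (p - k) * DD (((m:ℚ) + p - k - 1) - ((p - k : ℕ):ℚ)) k :=
            DD_add _ _ _
        _ = DD ((m:ℚ) + p - k - 1) (p - k) * DD ((m:ℚ) - 1) k := by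
            congr 1; rw [hpkq]; ring
    have r2 : DD ((m:ℚ) + n - j - k - p - 2) (n - p)
        = DD ((m:ℚ) + n - j - k - p - 2) a * DD ((m:ℚ) - 1) (k + j + 1) := by
      calc DD ((m:ℚ) + n - j - k - p - 2) (n - p)
          = DD ((m:ℚ) + n - j - k - p - 2) (a + (k + j + 1)) := by congr 1; omega
        _ = DD ((m:ℚ) + n - j - k - p - 2) a
            * DD (((m:ℚ) + n - j - k - p - 2) - (a:ℚ)) (k + j + 1) := DD_add _ _ _
        _ = _ := by congr 1; rw [haq]; ring
    have r3 : DD ((m:ℚ) - 1) (k + j + 1)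
        = ((m:ℚ) - 1) * (DD ((m:ℚ) - 2) k * DD ((m:ℚ) - k - 2) j) := by
      calc DD ((m:ℚ) - 1) (k + j + 1) = DD ((m:ℚ) - 1) (1 + (k + j)) := by congr 1; omega
        _ = DD ((m:ℚ) - 1) 1 * DD (((m:ℚ) - 1) - ((1:ℕ):ℚ)) (k + j) := DD_add _ _ _
        _ = ((m:ℚ) - 1) * DD ((m:ℚ) - 2) (k + j) := by
            rw [DD_one]; congr 1; push_cast; ring
        _ = ((m:ℚ) - 1) * (DD ((m:ℚ) - 2) k * DD (((m:ℚ) - 2) - (k:ℚ)) j) := by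
            rw [← DD_add]
        _ = _ := by congr 2; ring
    have r4 : DD ((m:ℚ) + b - 2) b
        = DD ((m:ℚ) + p - k - 1) (p - k) * ((m:ℚ) - 1) := by
      have hYb : (m:ℚ) + b - 2 = (m:ℚ) + p - k - 1 := by rw [hbq]; ring
      calc DD ((m:ℚ) + b - 2) b = DD ((m:ℚ) + p - k - 1) ((p - k) + 1) := by
            rw [hYb]
        _ = DD ((m:ℚ) + p - k - 1) (p - k)
            * DD (((m:ℚ) + p - k - 1) - ((p - k : ℕ):ℚ)) 1 := DD_add _ _ _
        _ = _ := by rw [DD_one, hpkq]; congr 1; ring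
    have e0' : DD ((m:ℚ) + a - 1) a = DD ((m:ℚ) + n - j - k - p - 2) a := by
      congr 1; rw [haq]; ring
    rw [e0', r4, r1, r2, r3]
    ring
  -- Step 5: per-m identity with Nat.choose
  have key : ∀ m : ℕ, ∏ u ∈ cells lam, ((m : ℚ) + content u)
      = (p.factorial : ℚ) * ((n-p).factorial : ℚ)
        * ((m + p - k - 1).choose p : ℚ) * ((m + n - j - k - p - 2).choose (n-p) : ℚ) := by
    intro m
    rw [hcells m]
    have c1 : ((m + p - k - 1 : ℕ) : ℚ) = (m:ℚ) + p - k - 1 := by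
      have h5 : (m + p - k - 1) + (k + 1) = m + p := by omega
      have h6 := congrArg (Nat.cast : ℕ → ℚ) h5
      push_cast at h6; linarith
    have c2 : ((m + n - j - k - p - 2 : ℕ) : ℚ) = (m:ℚ) + n - j - k - p - 2 := by
      have h5 : (m + n - j - k - p - 2) + (j + k + p + 2) = m + n := by omega
      have h6 := congrArg (Nat.cast : ℕ → ℚ) h5
      push_cast at h6; linarith
    rw [← c1, ← c2, DD_cast, DD_cast]
    ring
  -- Step 6: glue
  have hnfac : (n.factorial : ℚ) ≠ 0 := by positivity
  unfold cfrak mfrak fdim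
  rw [div_div_eq_mul_div, Finset.sum_mul, Finset.sum_div, Finset.mul_sum]
  refine Finset.sum_congr rfl fun d hd => ?_
  rw [Finset.prod_div_distrib, key (r - d)]
  field_simp
end
end
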